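/- arXiv:2402.03975 — 5 statements merged into one kernel-verified Lean document; each statement's English description precedes it below -/
import Mathlib

section
/- Suppose (λ,u) ∈ ℝ × ℝ^n is a solution of the ergodic equation of a mean-payoff game and the pair of policies (σ,τ) is induced by the bias u. Then (σ,τ) is optimal: for every pair of policies (σ',τ') and every initial vertex i ∈ [n], g_i(σ',τ) ≤ λ ≤ g_i(σ,τ'). -/
open MeasureTheory

/-- Weight of a pair of vertices: the weight of the corresponding edge if it exists, `0`
otherwise. -/
noncomputable def wt {n : ℕ} (E : Finset (Fin n × Fin n))
    (r : {e : Fin n × Fin n // e ∈ E} → ℝ) (p : Fin n × Fin n) : ℝ :=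
  if h : p ∈ E then r ⟨p, h⟩ else 0

/-- The set of values `r_{ij} + u_j` over the edges `(i,j)` going out of `i`. -/
def outVals {n : ℕ} (E : Finset (Fin n × Fin n)) (r : {e : Fin n × Fin n // e ∈ E} → ℝ)
    (u : Fin n → ℝ) (i : Fin n) : Set ℝ :=
  {v | ∃ j : Fin n, (i, j) ∈ E ∧ v = wt E r (i, j) + u j}

/-- `(λ, u)` solves the ergodic equation:
`λ + u i = max_{(i,j) ∈ E} (r_{ij} + u_j)` for `i ∈ VMax` and
`λ + u i = min_{(i,j) ∈ E} (r_{ij} + u_j)` for `i ∉ VMax` (i.e. `i ∈ VMin`). -/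
def IsErgodicSol {n : ℕ} (E : Finset (Fin n × Fin n)) (VMax : Finset (Fin n))
    (r : {e : Fin n × Fin n // e ∈ E} → ℝ) (lam : ℝ) (u : Fin n → ℝ) : Prop :=
  ∀ i : Fin n,
    (i ∈ VMax → IsGreatest (outVals E r u i) (lam + u i)) ∧
    (i ∉ VMax → IsLeast (outVals E r u i) (lam + u i))

/-- A policy of player Max. -/
def IsMaxPolicy {n : ℕ} (E : Finset (Fin n × Fin n)) (VMax : Finset (Fin n))
    (σ : {i : Fin n // i ∈ VMax} → Fin n) : Prop :=
  ∀ i, (i.1, σ i) ∈ E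

/-- A policy of player Min. -/
def IsMinPolicy {n : ℕ} (E : Finset (Fin n × Fin n)) (VMax : Finset (Fin n))
    (τ : {i : Fin n // i ∉ VMax} → Fin n) : Prop :=
  ∀ i, (i.1, τ i) ∈ E

/-- The successor map of the subgraph `G^{σ,τ}` in which every vertex keeps only the edge
chosen by the corresponding policy. -/
def combine {n : ℕ} (VMax : Finset (Fin n)) (σ : {i : Fin n // i ∈ VMax} → Fin n)
    (τ : {i : Fin n // i ∉ VMax} → Fin n) : Fin n → Fin n :=
  fun i => if h : i ∈ VMax then σ ⟨i, h⟩ else τ ⟨i, h⟩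

/-- The bias `u` induces the pair of policies `(σ, τ)`: at every vertex, the edge chosen by
the policy achieves the maximum (for Max) or minimum (for Min) of `r_{ij} + u_j`. -/
def Induces {n : ℕ} (E : Finset (Fin n × Fin n)) (VMax : Finset (Fin n))
    (r : {e : Fin n × Fin n // e ∈ E} → ℝ) (u : Fin n → ℝ)
    (σ : {i : Fin n // i ∈ VMax} → Fin n) (τ : {i : Fin n // i ∉ VMax} → Fin n) : Prop :=
  IsMaxPolicy E VMax σ ∧ IsMinPolicy E VMax τ ∧
  (∀ i : {i : Fin n // i ∈ VMax},
      IsGreatest (outVals E r u i.1) (wt E r (i.1, σ i) + u (σ i))) ∧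
  (∀ i : {i : Fin n // i ∉ VMax},
      IsLeast (outVals E r u i.1) (wt E r (i.1, τ i) + u (τ i)))

/-- The mean payoff `g_i` of the play starting at `i` following the successor map `f`. -/
noncomputable def payoff {n : ℕ} (E : Finset (Fin n × Fin n))
    (r : {e : Fin n × Fin n // e ∈ E} → ℝ) (f : Fin n → Fin n) (i : Fin n) : ℝ :=
  Filter.liminf
    (fun N : ℕ => (N : ℝ)⁻¹ * ∑ t ∈ Finset.range N, wt E r (f^[t] i, f^[t + 1] i))
    Filter.atTop

/-- `x` lies on a directed cycle of the functional graph of `f`. -/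
def IsPeriodicVertex {n : ℕ} (f : Fin n → Fin n) (x : Fin n) : Prop :=
  ∃ k : ℕ, 0 < k ∧ f^[k] x = x

/-- The functional graph of `f` has exactly one directed cycle. -/
def HasUniqueCycle {n : ℕ} (f : Fin n → Fin n) : Prop :=
  ∀ x y : Fin n, IsPeriodicVertex f x → IsPeriodicVertex f y → ∃ k : ℕ, f^[k] x = y

/-- `(σ, τ)` is a bias-induced pair of policies of the MPG with weights `r`. -/
def BiasInduced {n : ℕ} (E : Finset (Fin n × Fin n)) (VMax : Finset (Fin n))
    (r : {e : Fin n × Fin n // e ∈ E} → ℝ)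
    (σ : {i : Fin n // i ∈ VMax} → Fin n) (τ : {i : Fin n // i ∉ VMax} → Fin n) : Prop :=
  ∃ lam u, IsErgodicSol E VMax r lam u ∧ Induces E VMax r u σ τ

/-- `(σ, τ) ∈ Ξ`: a pair of policies whose subgraph `G^{σ,τ}` has exactly one cycle. -/
def InXi {n : ℕ} (E : Finset (Fin n × Fin n)) (VMax : Finset (Fin n))
    (σ : {i : Fin n // i ∈ VMax} → Fin n) (τ : {i : Fin n // i ∉ VMax} → Fin n) : Prop :=
  IsMaxPolicy E VMax σ ∧ IsMinPolicy E VMax τ ∧ HasUniqueCycle (combine VMax σ τ)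

/-- `P^{σ,τ}`: the set of weight vectors for which `(σ, τ)` is the unique pair of
bias-induced policies. -/
def Pcell {n : ℕ} (E : Finset (Fin n × Fin n)) (VMax : Finset (Fin n))
    (σ : {i : Fin n // i ∈ VMax} → Fin n) (τ : {i : Fin n // i ∉ VMax} → Fin n) :
    Set ({e : Fin n × Fin n // e ∈ E} → ℝ) :=
  {r | BiasInduced E VMax r σ τ ∧
    ∀ σ' τ', BiasInduced E VMax r σ' τ' → σ' = σ ∧ τ' = τ}

/-- `U := ∪_{(σ,τ) ∈ Ξ} P^{σ,τ}`. -/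
def Ucell {n : ℕ} (E : Finset (Fin n × Fin n)) (VMax : Finset (Fin n)) :
    Set ({e : Fin n × Fin n // e ∈ E} → ℝ) :=
  ⋃ σ, ⋃ τ, ⋃ (_ : InXi E VMax σ τ), Pcell E VMax σ τ

/-- `(λ, u)` solves the zero-player (fixed policies) equation on the functional graph of
`f`. -/
def IsZeroPlayerSol {n : ℕ} (E : Finset (Fin n × Fin n)) (f : Fin n → Fin n)
    (r : {e : Fin n × Fin n // e ∈ E} → ℝ) (lam : ℝ) (u : Fin n → ℝ) : Prop :=
  ∀ i : Fin n, lam + u i = wt E r (i, f i) + u (f i)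

/-- `(λ, u)` is the normalized solution of the zero-player equation: additionally `u`
vanishes at the smallest-index vertex of the cycle. For `(σ,τ) ∈ Ξ`, this characterizes
`(λ^{σ,τ}(r), u^{σ,τ}(r))`. -/
def IsNormalizedSol {n : ℕ} (E : Finset (Fin n × Fin n)) (f : Fin n → Fin n)
    (r : {e : Fin n × Fin n // e ∈ E} → ℝ) (lam : ℝ) (u : Fin n → ℝ) : Prop :=
  IsZeroPlayerSol E f r lam u ∧
  ∃ k : Fin n, IsPeriodicVertex f k ∧ (∀ l, IsPeriodicVertex f l → k ≤ l) ∧ u k = 0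

/-- The graph is ergodic: the ergodic equation is solvable for every choice of weights. -/
def IsErgodicGraph {n : ℕ} (E : Finset (Fin n × Fin n)) (VMax : Finset (Fin n)) : Prop :=
  ∀ r : {e : Fin n × Fin n // e ∈ E} → ℝ, ∃ lam u, IsErgodicSol E VMax r lam u


private lemma sum_le_aux {n : ℕ} (E : Finset (Fin n × Fin n))
    (r : {e : Fin n × Fin n // e ∈ E} → ℝ) (f : Fin n → Fin n) (lam : ℝ) (u : Fin n → ℝ)
    (h : ∀ i, wt E r (i, f i) + u (f i) ≤ lam + u i) (i : Fin n) (N : ℕ) :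
    ∑ t ∈ Finset.range N, wt E r (f^[t] i, f^[t + 1] i) ≤ N * lam + u i - u (f^[N] i) := by
  induction N with
  | zero => simp
  | succ N ih =>
    rw [Finset.sum_range_succ]
    have h1 := h (f^[N] i)
    have e1 : f^[N + 1] i = f (f^[N] i) := Function.iterate_succ_apply' f N i
    rw [e1]
    push_cast
    linarith

private lemma payoff_le_aux {n : ℕ} (E : Finset (Fin n × Fin n))
    (r : {e : Fin n × Fin n // e ∈ E} → ℝ) (f : Fin n → Fin n) (lam : ℝ) (u : Fin n → ℝ)
    (h : ∀ i, wt E r (i, f i) + u (f i) ≤ lam + u i) (i : Fin n) :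
    payoff E r f i ≤ lam := by
  obtain ⟨M, hM0, hMw, hMu⟩ : ∃ M : ℝ, 0 ≤ M ∧ (∀ p, |wt E r p| ≤ M) ∧ ∀ j, |u j| ≤ M := by
    refine ⟨(∑ p : Fin n × Fin n, |wt E r p|) + (∑ j, |u j|), by positivity, ?_, ?_⟩
    · intro p
      have h1 := Finset.single_le_sum (f := fun p => |wt E r p|)
        (fun q _ => abs_nonneg _) (Finset.mem_univ p)
      have h2 : (0:ℝ) ≤ ∑ j, |u j| := by positivity
      linarith
    · intro j
      have h1 := Finset.single_le_sum (f := fun j => |u j|)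
        (fun q _ => abs_nonneg _) (Finset.mem_univ j)
      have h2 : (0:ℝ) ≤ ∑ p : Fin n × Fin n, |wt E r p| := by positivity
      linarith
  set a : ℕ → ℝ := fun N => (N : ℝ)⁻¹ * ∑ t ∈ Finset.range N, wt E r (f^[t] i, f^[t + 1] i)
    with ha
  have hub : ∀ N, a N ≤ M := by
    intro N
    cases N with
    | zero => simp [ha, hM0]
    | succ N =>
      have hS : ∑ t ∈ Finset.range (N+1), wt E r (f^[t] i, f^[t + 1] i) ≤ (N+1) * M := by
        calc ∑ t ∈ Finset.range (N+1), wt E r (f^[t] i, f^[t + 1] i)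
            ≤ ∑ t ∈ Finset.range (N+1), M :=
              Finset.sum_le_sum fun t _ => (abs_le.1 (hMw _)).2
          _ = (N+1) * M := by simp [mul_comm]
      have hpos : (0:ℝ) < (N+1 : ℕ) := by positivity
      simp only [ha]
      rw [inv_mul_le_iff₀ hpos]
      calc ∑ t ∈ Finset.range (N+1), wt E r (f^[t] i, f^[t + 1] i) ≤ (N+1) * M := hS
        _ = ((N+1 : ℕ) : ℝ) * M := by push_cast; ring
  have hlb : ∀ N, -M ≤ a N := by
    intro N
    cases N with
    | zero => simp [ha]; linarith
    | succ N =>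
      have hS : -((N+1 : ℝ) * M) ≤ ∑ t ∈ Finset.range (N+1), wt E r (f^[t] i, f^[t + 1] i) := by
        calc -((N+1 : ℝ) * M) = ∑ t ∈ Finset.range (N+1), (-M) := by
              rw [Finset.sum_const, Finset.card_range]; push_cast; ring
          _ ≤ ∑ t ∈ Finset.range (N+1), wt E r (f^[t] i, f^[t + 1] i) :=
              Finset.sum_le_sum fun t _ => (abs_le.1 (hMw _)).1
      have hpos : (0:ℝ) < (N+1 : ℕ) := by positivity
      simp only [ha]
      rw [le_inv_mul_iff₀ hpos]
      calc ((N+1:ℕ):ℝ) * (-M) = -((N+1:ℝ) * M) := by push_cast; ring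
        _ ≤ _ := hS
  have hev : ∀ᶠ N : ℕ in Filter.atTop, a N ≤ lam + 2 * M * (N : ℝ)⁻¹ := by
    filter_upwards [Filter.eventually_ge_atTop 1] with N hN
    have hpos : (0:ℝ) < (N : ℝ) := by exact_mod_cast hN
    have hS := sum_le_aux E r f lam u h i N
    have h1 := (abs_le.1 (hMu i))
    have h2 := (abs_le.1 (hMu (f^[N] i)))
    calc a N ≤ (N : ℝ)⁻¹ * ((N:ℝ) * lam + u i - u (f^[N] i)) := by
          exact mul_le_mul_of_nonneg_left hS (inv_nonneg.2 hpos.le)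
      _ ≤ (N : ℝ)⁻¹ * ((N:ℝ) * lam + 2 * M) := by
          apply mul_le_mul_of_nonneg_left _ (inv_nonneg.2 hpos.le); linarith
      _ = lam + 2 * M * (N : ℝ)⁻¹ := by field_simp
  have htend : Filter.Tendsto (fun N : ℕ => lam + 2 * M * (N : ℝ)⁻¹) Filter.atTop
      (nhds lam) := by
    have h0 : Filter.Tendsto (fun N : ℕ => ((N : ℝ))⁻¹) Filter.atTop (nhds 0) :=
      tendsto_inv_atTop_nhds_zero_nat
    have := (tendsto_const_nhds (x := lam) (f := Filter.atTop (α := ℕ))).add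
      ((tendsto_const_nhds (x := 2 * M)).mul h0)
    simpa using this
  have hle : Filter.liminf a Filter.atTop ≤
      Filter.liminf (fun N : ℕ => lam + 2 * M * (N : ℝ)⁻¹) Filter.atTop := by
    refine Filter.liminf_le_liminf hev ?_ ?_
    · exact ⟨-M, Filter.eventually_map.2 (Filter.Eventually.of_forall hlb)⟩
    · apply Filter.IsBoundedUnder.isCoboundedUnder_ge
      refine ⟨lam + 2 * M + 1, Filter.eventually_map.2 (Filter.Eventually.of_forall fun N => ?_)⟩
      rcases Nat.eq_zero_or_pos N with hN | hN
      · simp [hN]; linarith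
      · have h1 : ((N:ℝ))⁻¹ ≤ 1 := by
          rw [inv_le_one₀ (by exact_mod_cast hN)]
          exact_mod_cast hN
        have h2 : (0:ℝ) ≤ (N:ℝ)⁻¹ := by positivity
        nlinarith
  rw [htend.liminf_eq] at hle
  exact hle

private lemma sum_ge_aux {n : ℕ} (E : Finset (Fin n × Fin n))
    (r : {e : Fin n × Fin n // e ∈ E} → ℝ) (f : Fin n → Fin n) (lam : ℝ) (u : Fin n → ℝ)
    (h : ∀ i, lam + u i ≤ wt E r (i, f i) + u (f i)) (i : Fin n) (N : ℕ) :
    N * lam + u i - u (f^[N] i) ≤ ∑ t ∈ Finset.range N, wt E r (f^[t] i, f^[t + 1] i) := by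
  induction N with
  | zero => simp
  | succ N ih =>
    rw [Finset.sum_range_succ]
    have h1 := h (f^[N] i)
    have e1 : f^[N + 1] i = f (f^[N] i) := Function.iterate_succ_apply' f N i
    rw [e1]
    push_cast
    linarith

private lemma le_payoff_aux {n : ℕ} (E : Finset (Fin n × Fin n))
    (r : {e : Fin n × Fin n // e ∈ E} → ℝ) (f : Fin n → Fin n) (lam : ℝ) (u : Fin n → ℝ)
    (h : ∀ i, lam + u i ≤ wt E r (i, f i) + u (f i)) (i : Fin n) :
    lam ≤ payoff E r f i := by
  obtain ⟨M, hM0, hMw, hMu⟩ : ∃ M : ℝ, 0 ≤ M ∧ (∀ p, |wt E r p| ≤ M) ∧ ∀ j, |u j| ≤ M := by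
    refine ⟨(∑ p : Fin n × Fin n, |wt E r p|) + (∑ j, |u j|), by positivity, ?_, ?_⟩
    · intro p
      have h1 := Finset.single_le_sum (f := fun p => |wt E r p|)
        (fun q _ => abs_nonneg _) (Finset.mem_univ p)
      have h2 : (0:ℝ) ≤ ∑ j, |u j| := by positivity
      linarith
    · intro j
      have h1 := Finset.single_le_sum (f := fun j => |u j|)
        (fun q _ => abs_nonneg _) (Finset.mem_univ j)
      have h2 : (0:ℝ) ≤ ∑ p : Fin n × Fin n, |wt E r p| := by positivity
      linarith
  set a : ℕ → ℝ := fun N => (N : ℝ)⁻¹ * ∑ t ∈ Finset.range N, wt E r (f^[t] i, f^[t + 1] i)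
    with ha
  have hub : ∀ N, a N ≤ M := by
    intro N
    cases N with
    | zero => simp [ha, hM0]
    | succ N =>
      have hS : ∑ t ∈ Finset.range (N+1), wt E r (f^[t] i, f^[t + 1] i) ≤ (N+1) * M := by
        calc ∑ t ∈ Finset.range (N+1), wt E r (f^[t] i, f^[t + 1] i)
            ≤ ∑ t ∈ Finset.range (N+1), M :=
              Finset.sum_le_sum fun t _ => (abs_le.1 (hMw _)).2
          _ = (N+1) * M := by simp [mul_comm]
      have hpos : (0:ℝ) < (N+1 : ℕ) := by positivity
      simp only [ha]
      rw [inv_mul_le_iff₀ hpos]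
      calc ∑ t ∈ Finset.range (N+1), wt E r (f^[t] i, f^[t + 1] i) ≤ (N+1) * M := hS
        _ = ((N+1 : ℕ) : ℝ) * M := by push_cast; ring
  have hev : ∀ᶠ N : ℕ in Filter.atTop, lam - 2 * M * (N : ℝ)⁻¹ ≤ a N := by
    filter_upwards [Filter.eventually_ge_atTop 1] with N hN
    have hpos : (0:ℝ) < (N : ℝ) := by exact_mod_cast hN
    have hS := sum_ge_aux E r f lam u h i N
    have h1 := (abs_le.1 (hMu i))
    have h2 := (abs_le.1 (hMu (f^[N] i)))
    calc lam - 2 * M * (N : ℝ)⁻¹ = (N : ℝ)⁻¹ * ((N:ℝ) * lam - 2 * M) := by field_simp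
      _ ≤ (N : ℝ)⁻¹ * ((N:ℝ) * lam + u i - u (f^[N] i)) := by
          apply mul_le_mul_of_nonneg_left _ (inv_nonneg.2 hpos.le); linarith
      _ ≤ a N := mul_le_mul_of_nonneg_left hS (inv_nonneg.2 hpos.le)
  have htend : Filter.Tendsto (fun N : ℕ => lam - 2 * M * (N : ℝ)⁻¹) Filter.atTop
      (nhds lam) := by
    have h0 : Filter.Tendsto (fun N : ℕ => ((N : ℝ))⁻¹) Filter.atTop (nhds 0) :=
      tendsto_inv_atTop_nhds_zero_nat
    have := (tendsto_const_nhds (x := lam) (f := Filter.atTop (α := ℕ))).sub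
      ((tendsto_const_nhds (x := 2 * M)).mul h0)
    simpa using this
  have hle : Filter.liminf (fun N : ℕ => lam - 2 * M * (N : ℝ)⁻¹) Filter.atTop ≤
      Filter.liminf a Filter.atTop := by
    refine Filter.liminf_le_liminf hev ?_ ?_
    · refine ⟨lam - 2 * M, Filter.eventually_map.2 (Filter.Eventually.of_forall fun N => ?_)⟩
      rcases Nat.eq_zero_or_pos N with hN | hN
      · simp [hN]; linarith
      · have h1 : ((N:ℝ))⁻¹ ≤ 1 := by
          rw [inv_le_one₀ (by exact_mod_cast hN)]
          exact_mod_cast hN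
        have h2 : (0:ℝ) ≤ (N:ℝ)⁻¹ := by positivity
        simp only [ge_iff_le]
        nlinarith
    · exact Filter.IsBoundedUnder.isCoboundedUnder_ge
        ⟨M, Filter.eventually_map.2 (Filter.Eventually.of_forall hub)⟩
  rw [htend.liminf_eq] at hle
  exact hle

/-- If `(λ, u)` solves the ergodic equation and `u` induces the pair of
policies `(σ, τ)`, then `(σ, τ)` is optimal. -/
theorem stmt6 (n : ℕ) (E : Finset (Fin n × Fin n)) (VMax : Finset (Fin n))
    (hout : ∀ i : Fin n, ∃ j : Fin n, (i, j) ∈ E)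
    (r : {e : Fin n × Fin n // e ∈ E} → ℝ) (lam : ℝ) (u : Fin n → ℝ)
    (hsol : IsErgodicSol E VMax r lam u)
    (σ : {i : Fin n // i ∈ VMax} → Fin n) (τ : {i : Fin n // i ∉ VMax} → Fin n)
    (hind : Induces E VMax r u σ τ) :
    ∀ σ' τ', IsMaxPolicy E VMax σ' → IsMinPolicy E VMax τ' → ∀ i : Fin n,
      payoff E r (combine VMax σ' τ) i ≤ lam ∧
      lam ≤ payoff E r (combine VMax σ τ') i := by

  obtain ⟨hσ, hτ, hσmax, hτmin⟩ := hind
  intro σ' τ' hσ' hτ' i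
  constructor
  · apply payoff_le_aux E r _ lam u _ i
    intro j
    by_cases hj : j ∈ VMax
    · have e : combine VMax σ' τ j = σ' ⟨j, hj⟩ := dif_pos hj
      rw [e]
      exact ((hsol j).1 hj).2 ⟨σ' ⟨j, hj⟩, hσ' ⟨j, hj⟩, rfl⟩
    · have e : combine VMax σ' τ j = τ ⟨j, hj⟩ := dif_neg hj
      rw [e]
      exact le_of_eq ((hτmin ⟨j, hj⟩).unique ((hsol j).2 hj))
  · apply le_payoff_aux E r _ lam u _ i
    intro j
    by_cases hj : j ∈ VMax
    · have e : combine VMax σ τ' j = σ ⟨j, hj⟩ := dif_pos hj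
      rw [e]
      exact le_of_eq (((hsol j).1 hj).unique (hσmax ⟨j, hj⟩))
    · have e : combine VMax σ τ' j = τ' ⟨j, hj⟩ := dif_neg hj
      rw [e]
      exact ((hsol j).2 hj).2 ⟨τ' ⟨j, hj⟩, hτ' ⟨j, hj⟩, rfl⟩
end

section
/- Suppose the graph G of the mean-payoff game is ergodic, i.e., the ergodic equation has a solution for every weight vector. Then for every r ∈ ℝ^E there exists a solution (λ,u) of the ergodic equation and a pair of policies (σ,τ) induced by u such that (σ,τ) ∈ Ξ (the subgraph G^{σ,τ} has exactly one directed cycle). -/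
open MeasureTheory

namespace Stmt10Aux

open Finset

variable {n : ℕ} {E : Finset (Fin n × Fin n)} {VMax : Finset (Fin n)}

lemma wt_eq (r : {e : Fin n × Fin n // e ∈ E} → ℝ) {p : Fin n × Fin n} (h : p ∈ E) :
    wt E r p = r ⟨p, h⟩ := dif_pos h

lemma sol_mem {r : {e : Fin n × Fin n // e ∈ E} → ℝ} {lam : ℝ} {u : Fin n → ℝ}
    (h : IsErgodicSol E VMax r lam u) (i : Fin n) :
    ∃ j, (i, j) ∈ E ∧ lam + u i = wt E r (i, j) + u j := by
  by_cases hi : i ∈ VMax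
  · obtain ⟨j, hj, he⟩ := ((h i).1 hi).1; exact ⟨j, hj, he⟩
  · obtain ⟨j, hj, he⟩ := ((h i).2 hi).1; exact ⟨j, hj, he⟩

lemma sol_ub {r : {e : Fin n × Fin n // e ∈ E} → ℝ} {lam : ℝ} {u : Fin n → ℝ}
    (h : IsErgodicSol E VMax r lam u) {i j : Fin n} (hi : i ∈ VMax) (hij : (i, j) ∈ E) :
    wt E r (i, j) + u j ≤ lam + u i := ((h i).1 hi).2 ⟨j, hij, rfl⟩

lemma sol_lb {r : {e : Fin n × Fin n // e ∈ E} → ℝ} {lam : ℝ} {u : Fin n → ℝ}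
    (h : IsErgodicSol E VMax r lam u) {i j : Fin n} (hi : i ∉ VMax) (hij : (i, j) ∈ E) :
    lam + u i ≤ wt E r (i, j) + u j := ((h i).2 hi).2 ⟨j, hij, rfl⟩

lemma sol_shift {r : {e : Fin n × Fin n // e ∈ E} → ℝ} {lam : ℝ} {u : Fin n → ℝ}
    (hs : IsErgodicSol E VMax r lam u) (c : ℝ) :
    IsErgodicSol E VMax r lam (fun i => u i - c) := by
  intro i
  constructor
  · intro hi
    constructor
    · obtain ⟨j, hj, he⟩ := sol_mem hs i
      exact ⟨j, hj, by dsimp only; linarith⟩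
    · rintro v ⟨j, hj, rfl⟩
      have := sol_ub hs hi hj
      dsimp only; linarith
  · intro hi
    constructor
    · obtain ⟨j, hj, he⟩ := sol_mem hs i
      exact ⟨j, hj, by dsimp only; linarith⟩
    · rintro v ⟨j, hj, rfl⟩
      have := sol_lb hs hi hj
      dsimp only; linarith

/-- Key consequence of ergodicity: there is no pair of disjoint nonempty sets `A`, `B`
such that `A` is Max-live and Min-closed while `B` is Max-closed and Min-live. -/
lemma star (herg : IsErgodicGraph E VMax)
    (A B : Finset (Fin n)) (hA : A.Nonempty) (hB : B.Nonempty)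
    (hdisj : ∀ i, i ∈ A → i ∉ B)
    (hA1 : ∀ i ∈ A, i ∈ VMax → ∃ j ∈ A, (i, j) ∈ E)
    (hA2 : ∀ i ∈ A, i ∉ VMax → ∀ j, (i, j) ∈ E → j ∈ A)
    (hB1 : ∀ i ∈ B, i ∈ VMax → ∀ j, (i, j) ∈ E → j ∈ B)
    (hB2 : ∀ i ∈ B, i ∉ VMax → ∃ j ∈ B, (i, j) ∈ E) : False := by
  classical
  obtain ⟨mu, w, hw⟩ := herg (fun e => if e.1.1 ∈ A then 1 else 0)
  have hwt : ∀ {i j : Fin n} (h : (i, j) ∈ E),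
      wt E (fun e => if e.1.1 ∈ A then (1 : ℝ) else 0) (i, j)
        = if i ∈ A then (1 : ℝ) else 0 := by
    intro i j h; rw [wt_eq _ h]
  obtain ⟨a, haA, hamin⟩ := Finset.exists_min_image A w hA
  obtain ⟨b, hbB, hbmax⟩ := Finset.exists_max_image B w hB
  have h1 : (1 : ℝ) ≤ mu := by
    by_cases ha : a ∈ VMax
    · obtain ⟨j, hjA, hij⟩ := hA1 a haA ha
      have h2 := sol_ub hw ha hij
      rw [hwt hij, if_pos haA] at h2
      have h3 := hamin j hjA
      linarith
    · obtain ⟨j, hij, he⟩ := sol_mem hw a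
      have hjA := hA2 a haA ha j hij
      rw [hwt hij, if_pos haA] at he
      have h3 := hamin j hjA
      linarith
  have h0 : mu ≤ 0 := by
    by_cases hb : b ∈ VMax
    · obtain ⟨j, hij, he⟩ := sol_mem hw b
      have hjB := hB1 b hbB hb j hij
      rw [hwt hij, if_neg (fun h => hdisj b h hbB)] at he
      have h3 := hbmax j hjB
      linarith
    · obtain ⟨j, hjB, hij⟩ := hB2 b hbB hb
      have h2 := sol_lb hw hb hij
      rw [hwt hij, if_neg (fun h => hdisj b h hbB)] at h2
      have h3 := hbmax j hjB
      linarith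
  linarith

lemma lam_bound {r : {e : Fin n × Fin n // e ∈ E} → ℝ} {lam : ℝ} {u : Fin n → ℝ}
    (hn : 0 < n) (hout : ∀ i : Fin n, ∃ j : Fin n, (i, j) ∈ E)
    (hs : IsErgodicSol E VMax r lam u) {M : ℝ}
    (hM : ∀ p ∈ E, |wt E r p| ≤ M) : |lam| ≤ M := by
  haveI : NeZero n := ⟨hn.ne'⟩
  obtain ⟨imax, -, hmax⟩ := Finset.exists_max_image Finset.univ u ⟨0, Finset.mem_univ 0⟩
  obtain ⟨imin, -, hmin⟩ := Finset.exists_min_image Finset.univ u ⟨0, Finset.mem_univ 0⟩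
  rw [abs_le]
  constructor
  · by_cases hi : imin ∈ VMax
    · obtain ⟨j, hij⟩ := hout imin
      have h2 := sol_ub hs hi hij
      have h3 := (abs_le.1 (hM _ hij)).1
      have h4 := hmin j (Finset.mem_univ j)
      linarith
    · obtain ⟨j, hij, he⟩ := sol_mem hs imin
      have h3 := (abs_le.1 (hM _ hij)).1
      have h4 := hmin j (Finset.mem_univ j)
      linarith
  · by_cases hi : imax ∈ VMax
    · obtain ⟨j, hij, he⟩ := sol_mem hs imax
      have h3 := (abs_le.1 (hM _ hij)).2
      have h4 := hmax j (Finset.mem_univ j)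
      linarith
    · obtain ⟨j, hij⟩ := hout imax
      have h2 := sol_lb hs hi hij
      have h3 := (abs_le.1 (hM _ hij)).2
      have h4 := hmax j (Finset.mem_univ j)
      linarith

end Stmt10Aux

namespace Stmt10Aux

open Finset

variable {n : ℕ} {E : Finset (Fin n × Fin n)} {VMax : Finset (Fin n)}

/-- Uniform oscillation bound for solutions of the ergodic equation, via ergodicity. -/
lemma osc (herg : IsErgodicGraph E VMax)
    {r : {e : Fin n × Fin n // e ∈ E} → ℝ} {lam : ℝ} {u : Fin n → ℝ}
    (hs : IsErgodicSol E VMax r lam u)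
    {R : ℝ} (hR : 0 < R) (hW : ∀ p ∈ E, |wt E r p - lam| ≤ R) :
    ∀ i j : Fin n, u i - u j ≤ n * R := by
  classical
  intro i0 j0
  obtain ⟨imax, -, hmax⟩ := Finset.exists_max_image Finset.univ u ⟨i0, mem_univ _⟩
  set Mx := u imax with hMx
  suffices h : ∀ x : Fin n, Mx - n * R ≤ u x by
    have h1 := h j0; have h2 := hmax i0 (mem_univ _); linarith
  by_contra hcon
  push_neg at hcon
  obtain ⟨x0, hx0⟩ := hcon
  set band : ℕ → Finset (Fin n) :=
    fun k => univ.filter (fun v => Mx - (k + 1) * R < u v ∧ u v ≤ Mx - k * R) with hband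
  have hcases : ∃ k, k < n ∧ band k = ∅ := by
    by_contra hall
    push_neg at hall
    have hno : ∀ k, k < n → (band k).Nonempty :=
      fun k hk => hall k hk
    have hdisjb : ∀ k1 ∈ Finset.range n, ∀ k2 ∈ Finset.range n, k1 ≠ k2 →
        Disjoint (band k1) (band k2) := by
      intro k1 _ k2 _ hne
      rw [Finset.disjoint_left]
      intro v hv1 hv2
      rw [hband, mem_filter] at hv1 hv2
      rcases lt_or_gt_of_ne hne with h | h
      · have hcast : ((k1 : ℝ) + 1) ≤ (k2 : ℝ) := by exact_mod_cast h
        nlinarith [hv1.2.1, hv2.2.2, hR]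
      · have hcast : ((k2 : ℝ) + 1) ≤ (k1 : ℝ) := by exact_mod_cast h
        nlinarith [hv2.2.1, hv1.2.2, hR]
    have hsub : (Finset.range n).biUnion band ⊆ univ.erase x0 := by
      intro v hv
      rw [Finset.mem_biUnion] at hv
      obtain ⟨k, hk, hvk⟩ := hv
      rw [Finset.mem_erase]
      refine ⟨?_, mem_univ _⟩
      rintro rfl
      rw [hband, mem_filter] at hvk
      have hk' := Finset.mem_range.1 hk
      have hcast : ((k : ℝ) + 1) ≤ (n : ℝ) := by exact_mod_cast hk'
      nlinarith [hvk.2.1, hR]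
    have hcard1 := Finset.card_biUnion hdisjb
    have hge : n ≤ ∑ k ∈ Finset.range n, (band k).card := by
      calc n = ∑ _k ∈ Finset.range n, 1 := by simp
      _ ≤ ∑ k ∈ Finset.range n, (band k).card := by
        refine Finset.sum_le_sum fun k hk => ?_
        exact Nat.one_le_iff_ne_zero.2 (Finset.card_ne_zero_of_mem (hno k (Finset.mem_range.1 hk)).choose_spec)
    have hle : ((Finset.range n).biUnion band).card ≤ (univ.erase x0).card :=
      Finset.card_le_card hsub
    rw [hcard1, Finset.card_erase_of_mem (mem_univ _), card_univ, Fintype.card_fin] at hle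
    have hn : 0 < n := x0.pos
    omega
  obtain ⟨k, hkn, hke⟩ := hcases
  set θ : ℝ := Mx - (k + 1) * R with hθ
  have hgap : ∀ v : Fin n, θ < u v → Mx - k * R < u v := by
    intro v hv
    by_contra hle
    push_neg at hle
    have hvb : v ∈ band k := by
      rw [hband, mem_filter]; exact ⟨mem_univ _, hv, hle⟩
    rw [hke] at hvb; exact absurd hvb (Finset.notMem_empty v)
  set A := univ.filter (fun v => θ < u v) with hA
  set B := univ.filter (fun v => ¬ θ < u v) with hB
  have hmemA : ∀ v, v ∈ A ↔ θ < u v := by intro v; rw [hA, mem_filter]; simp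
  have hmemB : ∀ v, v ∈ B ↔ ¬ θ < u v := by intro v; rw [hB, mem_filter]; simp
  have hWle : ∀ {i j : Fin n}, (i, j) ∈ E →
      wt E r (i, j) - lam ≤ R ∧ lam - wt E r (i, j) ≤ R := by
    intro i j h
    have := abs_le.1 (hW _ h)
    constructor <;> linarith [this.1, this.2]
  refine star herg A B ⟨imax, ?_⟩ ⟨x0, ?_⟩ ?_ ?_ ?_ ?_ ?_
  · rw [hmemA]; rw [hθ]; nlinarith [hR]
  · rw [hmemB]; push_neg
    have hcast : ((k : ℝ) + 1) ≤ (n : ℝ) := by exact_mod_cast hkn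
    rw [hθ]; nlinarith [hR]
  · intro i hiA hiB
    rw [hmemA] at hiA; rw [hmemB] at hiB; exact hiB hiA
  · -- A Max-live
    intro i hiA hiVM
    obtain ⟨j, hij, he⟩ := sol_mem hs i
    refine ⟨j, ?_, hij⟩
    rw [hmemA] at hiA ⊢
    have h1 := (hWle hij).1
    have h2 := hgap i hiA
    rw [hθ]; linarith
  · -- A Min-closed
    intro i hiA hiVM j hij
    have h0 := sol_lb hs hiVM hij
    rw [hmemA] at hiA ⊢
    have h1 := (hWle hij).1
    have h2 := hgap i hiA
    rw [hθ]; linarith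
  · -- B Max-closed
    intro i hiB hiVM j hij
    have h0 := sol_ub hs hiVM hij
    rw [hmemB] at hiB ⊢
    push_neg at hiB ⊢
    have h1 := (hWle hij).2
    by_contra hlt
    push_neg at hlt
    have := hgap j hlt
    rw [hθ] at hiB
    linarith
  · -- B Min-live
    intro i hiB hiVM
    obtain ⟨j, hij, he⟩ := sol_mem hs i
    refine ⟨j, ?_, hij⟩
    rw [hmemB] at hiB ⊢
    push_neg at hiB ⊢
    have h1 := (hWle hij).2
    by_contra hlt
    push_neg at hlt
    have := hgap j hlt
    rw [hθ] at hiB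
    linarith

end Stmt10Aux

namespace Stmt10Aux

open Finset Function

variable {n : ℕ} {E : Finset (Fin n × Fin n)} {VMax : Finset (Fin n)}

/-- Distinct sums over disjoint cycles. -/
def DS (E : Finset (Fin n × Fin n)) (r' : {e : Fin n × Fin n // e ∈ E} → ℝ) : Prop :=
  ∀ (g1 g2 : Fin n → Fin n) (O1 O2 : Finset (Fin n)), O1.Nonempty → O2.Nonempty →
    (∀ x ∈ O1, x ∉ O2) →
    (∀ x ∈ O1, (x, g1 x) ∈ E) → (∀ x ∈ O2, (x, g2 x) ∈ E) →
    (O2.card : ℝ) * ∑ x ∈ O1, wt E r' (x, g1 x) ≠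
      (O1.card : ℝ) * ∑ x ∈ O2, wt E r' (x, g2 x)

lemma exists_selector_uc {r : {e : Fin n × Fin n // e ∈ E} → ℝ} {lam : ℝ} {u : Fin n → ℝ}
    (hs : IsErgodicSol E VMax r lam u) (hDS : DS E r) :
    ∃ f : Fin n → Fin n, (∀ x, (x, f x) ∈ E ∧ lam + u x = wt E r (x, f x) + u (f x)) ∧
      HasUniqueCycle f := by
  classical
  choose f hf1 hf2 using sol_mem hs
  refine ⟨f, fun x => ⟨hf1 x, hf2 x⟩, ?_⟩
  intro x y hx hy
  by_contra hcon
  push_neg at hcon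
  obtain ⟨kx, hkx, hfx⟩ := hx
  obtain ⟨ky, hky, hfy⟩ := hy
  have hxper : x ∈ periodicPts f := ⟨kx, hkx, hfx⟩
  have hyper : y ∈ periodicPts f := ⟨ky, hky, hfy⟩
  set O : Fin n → Finset (Fin n) :=
    fun z => (Finset.range (minimalPeriod f z)).image (fun s => f^[s] z) with hO
  have hinj : ∀ z : Fin n, ∀ s ∈ Finset.range (minimalPeriod f z),
      ∀ t ∈ Finset.range (minimalPeriod f z), f^[s] z = f^[t] z → s = t := by
    intro z s hs t ht hst
    exact iterate_injOn_Iio_minimalPeriod (Finset.mem_range.1 hs) (Finset.mem_range.1 ht) hst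
  have hOmem : ∀ (z : Fin n), z ∈ periodicPts f → ∀ t : ℕ, f^[t] z ∈ O z := by
    intro z hz t
    rw [hO, Finset.mem_image]
    exact ⟨t % minimalPeriod f z,
      Finset.mem_range.2 (Nat.mod_lt _ (minimalPeriod_pos_of_mem_periodicPts hz)),
      iterate_mod_minimalPeriod_eq⟩
  have hcard : ∀ z : Fin n, (O z).card = minimalPeriod f z := by
    intro z
    rw [hO]
    rw [Finset.card_image_of_injOn fun s hs t ht hst =>
      hinj z s (by simpa using hs) t (by simpa using ht) hst, Finset.card_range]
  have hsum : ∀ z : Fin n, ∑ w ∈ O z, wt E r (w, f w) = (minimalPeriod f z : ℝ) * lam := by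
    intro z
    rw [hO, Finset.sum_image (hinj z)]
    have hterm : ∀ t : ℕ, wt E r (f^[t] z, f (f^[t] z)) = lam + (u (f^[t] z) - u (f^[t+1] z)) := by
      intro t
      have h2 := hf2 (f^[t] z)
      rw [Function.iterate_succ_apply']
      linarith
    calc ∑ t ∈ Finset.range (minimalPeriod f z), wt E r (f^[t] z, f (f^[t] z))
        = ∑ t ∈ Finset.range (minimalPeriod f z), (lam + (u (f^[t] z) - u (f^[t+1] z))) :=
          Finset.sum_congr rfl (fun t _ => hterm t)
      _ = (minimalPeriod f z : ℝ) * lam +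
            ((fun t => u (f^[t] z)) 0 - (fun t => u (f^[t] z)) (minimalPeriod f z)) := by
          rw [Finset.sum_add_distrib, Finset.sum_const, Finset.card_range,
            Finset.sum_range_sub' (fun t => u (f^[t] z)), nsmul_eq_mul]
      _ = (minimalPeriod f z : ℝ) * lam := by
          simp [Function.iterate_minimalPeriod]
  have hdisj : ∀ w ∈ O x, w ∉ O y := by
    intro w hwx hwy
    rw [hO, Finset.mem_image] at hwx hwy
    obtain ⟨s, hs, rfl⟩ := hwx
    obtain ⟨t, ht, heq⟩ := hwy
    rcases Nat.eq_zero_or_pos t with rfl | htpos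
    · exact hcon s (by simpa using heq.symm)
    · have h1 : f^[minimalPeriod f y - t + s] x = y := by
        rw [Function.iterate_add_apply, ← heq, ← Function.iterate_add_apply,
          Nat.sub_add_cancel (le_of_lt (Finset.mem_range.1 ht))]
        exact Function.iterate_minimalPeriod
      exact hcon _ h1
  have hnex : (O x).Nonempty := ⟨x, by simpa using hOmem x hxper 0⟩
  have hney : (O y).Nonempty := ⟨y, by simpa using hOmem y hyper 0⟩
  refine hDS f f (O x) (O y) hnex hney hdisj (fun w _ => hf1 w) (fun w _ => hf1 w) ?_
  rw [hsum x, hsum y, hcard x, hcard y]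
  ring

end Stmt10Aux

namespace Stmt10Aux

open Finset Polynomial

variable {n : ℕ} {E : Finset (Fin n × Fin n)} {VMax : Finset (Fin n)}

/-- The perturbed weight vector. -/
noncomputable def pert (E : Finset (Fin n × Fin n)) (r : {e : Fin n × Fin n // e ∈ E} → ℝ)
    (t : ℝ) : {e : Fin n × Fin n // e ∈ E} → ℝ :=
  fun e => r e + t ^ (n * e.1.1.val + e.1.2.val + 1)

lemma enc_inj {p q : Fin n × Fin n}
    (h : n * p.1.val + p.2.val = n * q.1.val + q.2.val) : p = q := by
  have hb1 : p.2.val < n := p.2.isLt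
  have hb2 : q.2.val < n := q.2.isLt
  have key : p.1.val = q.1.val := by
    rcases lt_trichotomy p.1.val q.1.val with hlt | he | hlt
    · have h2 : n * p.1.val + n ≤ n * q.1.val := by
        have h3 := Nat.mul_le_mul_left n (Nat.succ_le_of_lt hlt)
        simpa [Nat.mul_succ] using h3
      omega
    · exact he
    · have h2 : n * q.1.val + n ≤ n * p.1.val := by
        have h3 := Nat.mul_le_mul_left n (Nat.succ_le_of_lt hlt)
        simpa [Nat.mul_succ] using h3
      omega
  have key2 : p.2.val = q.2.val := by
    rw [key] at h; omega
  have e1 : p.1 = q.1 := Fin.ext key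
  have e2 : p.2 = q.2 := Fin.ext key2
  exact Prod.ext e1 e2

lemma exists_good_t (r : {e : Fin n × Fin n // e ∈ E} → ℝ) (k : ℕ) :
    ∃ t : ℝ, 0 < t ∧ t < 1 / ((k : ℝ) + 1) ∧ DS E (pert E r t) := by
  classical
  set ι := ((Fin n → Fin n) × (Fin n → Fin n)) × (Finset (Fin n) × Finset (Fin n)) with hι
  set cond : ι → Prop := fun P =>
    P.2.1.Nonempty ∧ P.2.2.Nonempty ∧ (∀ x ∈ P.2.1, x ∉ P.2.2) ∧
      (∀ x ∈ P.2.1, (x, P.1.1 x) ∈ E) ∧ (∀ x ∈ P.2.2, (x, P.1.2 x) ∈ E) with hcond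
  set poly : ι → Polynomial ℝ := fun P =>
    Polynomial.C ((P.2.2.card : ℝ) * (∑ x ∈ P.2.1, wt E r (x, P.1.1 x))
        - (P.2.1.card : ℝ) * (∑ x ∈ P.2.2, wt E r (x, P.1.2 x)))
      + Polynomial.C (P.2.2.card : ℝ) *
          (∑ x ∈ P.2.1, Polynomial.X ^ (n * x.val + (P.1.1 x).val + 1))
      - Polynomial.C (P.2.1.card : ℝ) *
          (∑ x ∈ P.2.2, Polynomial.X ^ (n * x.val + (P.1.2 x).val + 1)) with hpoly
  have hpoly_ne : ∀ P : ι, cond P → poly P ≠ 0 := by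
    intro P hc h0
    obtain ⟨x1, hx1⟩ := hc.1
    set d := n * x1.val + (P.1.1 x1).val + 1 with hd
    have hcoeff := congrArg (fun p : Polynomial ℝ => p.coeff d) h0
    simp only [hpoly, Polynomial.coeff_sub, Polynomial.coeff_add, Polynomial.coeff_C_mul,
      Polynomial.finset_sum_coeff, Polynomial.coeff_X_pow, Polynomial.coeff_C,
      Polynomial.coeff_zero] at hcoeff
    rw [if_neg (by omega : ¬ d = 0)] at hcoeff
    have hsum1 : (∑ x ∈ P.2.1, if d = n * x.val + (P.1.1 x).val + 1 then (1:ℝ) else 0) = 1 := by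
      rw [Finset.sum_eq_single_of_mem x1 hx1]
      · rw [if_pos rfl]
      · intro x hx hne
        rw [if_neg]
        intro hdx
        have : (x, P.1.1 x) = (x1, P.1.1 x1) :=
          enc_inj (show n * x.val + (P.1.1 x).val = n * x1.val + (P.1.1 x1).val by omega)
        exact hne (congrArg Prod.fst this)
    have hsum2 : (∑ x ∈ P.2.2, if d = n * x.val + (P.1.2 x).val + 1 then (1:ℝ) else 0) = 0 := by
      refine Finset.sum_eq_zero fun x hx => ?_
      rw [if_neg]
      intro hdx
      have heq : (x, P.1.2 x) = (x1, P.1.1 x1) :=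
        enc_inj (show n * x.val + (P.1.2 x).val = n * x1.val + (P.1.1 x1).val by omega)
      have : x = x1 := congrArg Prod.fst heq
      exact hc.2.2.1 x1 hx1 (this ▸ hx)
    rw [hsum1, hsum2] at hcoeff
    have h2 : (P.2.2.card : ℝ) = 0 := by linarith [hcoeff]
    have := hc.2.1
    rw [← Finset.card_pos] at this
    exact absurd h2 (by positivity)
  have hfin : ∀ P : ι, {t : ℝ | cond P ∧ (poly P).IsRoot t}.Finite := by
    intro P
    by_cases hc : cond P
    · exact (Polynomial.finite_setOf_isRoot (hpoly_ne P hc)).subset fun t ht => ht.2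
    · exact Set.finite_empty.subset fun t ht => absurd ht.1 hc
  have hbad : (⋃ P : ι, {t : ℝ | cond P ∧ (poly P).IsRoot t}).Finite := Set.finite_iUnion hfin
  have hIoo : (Set.Ioo (0:ℝ) (1 / ((k:ℝ)+1))).Infinite := Set.Ioo_infinite (by positivity)
  obtain ⟨t, ht⟩ := (hIoo.diff hbad).nonempty
  rw [Set.mem_diff, Set.mem_Ioo] at ht
  refine ⟨t, ht.1.1, ht.1.2, ?_⟩
  intro g1 g2 O1 O2 h1 h2 h3 h4 h5 heq
  apply ht.2
  rw [Set.mem_iUnion]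
  refine ⟨((g1, g2), (O1, O2)), ⟨h1, h2, h3, h4, h5⟩, ?_⟩
  show (poly ((g1, g2), (O1, O2))).eval t = 0
  have hsplit1 : ∀ x ∈ O1, wt E (pert E r t) (x, g1 x)
      = wt E r (x, g1 x) + t ^ (n * x.val + (g1 x).val + 1) := by
    intro x hx
    rw [wt_eq _ (h4 x hx), wt_eq _ (h4 x hx)]
    rfl
  have hsplit2 : ∀ x ∈ O2, wt E (pert E r t) (x, g2 x)
      = wt E r (x, g2 x) + t ^ (n * x.val + (g2 x).val + 1) := by
    intro x hx
    rw [wt_eq _ (h5 x hx), wt_eq _ (h5 x hx)]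
    rfl
  rw [Finset.sum_congr rfl hsplit1, Finset.sum_congr rfl hsplit2, Finset.sum_add_distrib,
    Finset.sum_add_distrib] at heq
  simp only [hpoly, Polynomial.eval_sub, Polynomial.eval_add, Polynomial.eval_mul,
    Polynomial.eval_C, Polynomial.eval_finset_sum, Polynomial.eval_pow, Polynomial.eval_X]
  linarith [heq]
end Stmt10Aux


open Stmt10Aux Finset Filter

/-- If the graph is ergodic, then for every weight vector there exists a
solution of the ergodic equation and a pair of bias-induced policies `(σ,τ) ∈ Ξ`. -/
theorem stmt10 (n : ℕ) (E : Finset (Fin n × Fin n)) (VMax : Finset (Fin n))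
    (hout : ∀ i : Fin n, ∃ j : Fin n, (i, j) ∈ E)
    (herg : IsErgodicGraph E VMax) :
    ∀ r : {e : Fin n × Fin n // e ∈ E} → ℝ,
      ∃ (lam : ℝ) (u : Fin n → ℝ) (σ : {i : Fin n // i ∈ VMax} → Fin n)
        (τ : {i : Fin n // i ∉ VMax} → Fin n),
        IsErgodicSol E VMax r lam u ∧ Induces E VMax r u σ τ ∧
        HasUniqueCycle (combine VMax σ τ) := by
  classical
  intro r
  rcases Nat.eq_zero_or_pos n with hn | hn
  · subst hn
    exact ⟨0, fun _ => 0, fun i => i.1.elim0, fun i => i.1.elim0,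
      fun i => i.elim0,
      ⟨fun i => i.1.elim0, fun i => i.1.elim0, fun i => i.1.elim0, fun i => i.1.elim0⟩,
      fun x => x.elim0⟩
  haveI : NeZero n := ⟨hn.ne'⟩
  -- uniform bounds
  have hEatt : (E.attach).Nonempty := by
    obtain ⟨j, hj⟩ := hout ⟨0, hn⟩
    exact ⟨⟨_, hj⟩, Finset.mem_attach _ _⟩
  set Rb : ℝ := E.attach.sup' hEatt (fun e => |r e|) with hRb
  have hRb' : ∀ (p : Fin n × Fin n) (hp : p ∈ E), |r ⟨p, hp⟩| ≤ Rb :=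
    fun p hp => Finset.le_sup' (fun e => |r e|) (Finset.mem_attach _ ⟨p, hp⟩)
  have hRb0 : 0 ≤ Rb := le_trans (abs_nonneg _) (hRb' _ hEatt.choose.2)
  set M : ℝ := Rb + 1 with hM
  set R : ℝ := 2 * M + 1 with hR
  have hRpos : 0 < R := by rw [hR, hM]; linarith
  set C : ℝ := n * R with hC
  -- per-index data
  have hdata : ∀ k : ℕ, ∃ (t lam : ℝ) (w : Fin n → ℝ) (f : Fin n → Fin n),
      0 < t ∧ t < 1 / ((k : ℝ) + 1) ∧
      IsErgodicSol E VMax (pert E r t) lam w ∧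
      (∀ i, 0 ≤ w i ∧ w i ≤ C) ∧ |lam| ≤ M ∧
      (∀ x, (x, f x) ∈ E ∧ lam + w x = wt E (pert E r t) (x, f x) + w (f x)) ∧
      HasUniqueCycle f := by
    intro k
    obtain ⟨t, ht0, ht1, hDS⟩ := exists_good_t r k
    obtain ⟨lam, u, hu⟩ := herg (pert E r t)
    have ht1' : t ≤ 1 := by
      have h2 : 1 / ((k : ℝ) + 1) ≤ 1 := by
        rw [div_le_one (by positivity)]; simp
      linarith
    have hwtb : ∀ p ∈ E, |wt E (pert E r t) p| ≤ M := by
      intro p hp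
      rw [wt_eq _ hp]
      have h1 := hRb' p hp
      have h2 : |t ^ (n * p.1.val + p.2.val + 1)| ≤ 1 := by
        rw [abs_of_nonneg (by positivity)]
        exact pow_le_one₀ ht0.le ht1'
      calc |pert E r t ⟨p, hp⟩| = |r ⟨p, hp⟩ + t ^ (n * p.1.val + p.2.val + 1)| := rfl
        _ ≤ |r ⟨p, hp⟩| + |t ^ (n * p.1.val + p.2.val + 1)| := abs_add_le _ _
        _ ≤ Rb + 1 := add_le_add h1 h2
    have hlam : |lam| ≤ M := lam_bound hn hout hu hwtb
    have hWlam : ∀ p ∈ E, |wt E (pert E r t) p - lam| ≤ R := by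
      intro p hp
      have h1 := hwtb p hp
      have h2 := abs_sub_abs_le_abs_sub (wt E (pert E r t) p) lam
      calc |wt E (pert E r t) p - lam| ≤ |wt E (pert E r t) p| + |lam| := abs_sub _ _
        _ ≤ M + M := add_le_add h1 hlam
        _ ≤ R := by rw [hR]; linarith
    obtain ⟨imin, -, hminu⟩ := Finset.exists_min_image Finset.univ u ⟨⟨0, hn⟩, Finset.mem_univ _⟩
    set w : Fin n → ℝ := fun i => u i - u imin with hwdef
    have hw : IsErgodicSol E VMax (pert E r t) lam w := sol_shift hu (u imin)
    have hosc := osc herg hw hRpos hWlam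
    have hwb : ∀ i, 0 ≤ w i ∧ w i ≤ C := by
      intro i
      constructor
      · have := hminu i (Finset.mem_univ i); rw [hwdef]; dsimp only; linarith
      · have := hosc i imin; rw [hwdef]; dsimp only; rw [hC]
        have h3 : u i - u imin = w i - w imin := by rw [hwdef]; ring
        linarith [hosc i imin]
    obtain ⟨f, hf, hUC⟩ := exists_selector_uc hw hDS
    exact ⟨t, lam, w, f, ht0, ht1, hw, hwb, hlam, hf, hUC⟩
  choose tseq lamseq wseq fseq ht0 ht1 hsol hwb hlamb hfprop hUC using hdata
  -- pigeonhole on the selector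
  obtain ⟨f, hfib⟩ := Finite.exists_infinite_fiber fseq
  haveI : Infinite ↥(fseq ⁻¹' {f}) := hfib
  haveI : DecidablePred (· ∈ fseq ⁻¹' {f}) := Classical.decPred _
  set φ : ℕ ↪o ℕ := Nat.orderEmbeddingOfSet (fseq ⁻¹' {f}) with hφ
  have hφS : ∀ m, fseq (φ m) = f := by
    intro m
    have h1 : φ m ∈ fseq ⁻¹' {f} := by
      rw [hφ, Nat.orderEmbeddingOfSet_apply]
      exact (Nat.Subtype.ofNat (fseq ⁻¹' {f}) m).2
    exact h1
  -- compactness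
  set seq : ℕ → (Fin n → ℝ) × ℝ := fun m => (wseq (φ m), lamseq (φ m)) with hseq
  have hseqmem : ∀ m, seq m ∈
      Set.Icc ((fun _ => 0, -M) : (Fin n → ℝ) × ℝ) ((fun _ => C, M) : (Fin n → ℝ) × ℝ) := by
    intro m
    rw [Set.mem_Icc]
    constructor
    · exact ⟨fun i => (hwb (φ m) i).1, neg_le_of_abs_le (hlamb (φ m))⟩
    · exact ⟨fun i => (hwb (φ m) i).2, le_of_abs_le (hlamb (φ m))⟩
  obtain ⟨⟨w0, lam0⟩, -, ψ, hψ, hconv⟩ := IsCompact.tendsto_subseq isCompact_Icc hseqmem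
  set ρ : ℕ → ℕ := fun m => φ (ψ m) with hρ
  have hfconst : ∀ m, fseq (ρ m) = f := fun m => hφS (ψ m)
  have hwconv : Tendsto (fun m => wseq (ρ m)) atTop (nhds w0) :=
    (continuous_fst.tendsto _).comp hconv
  have hwi : ∀ i, Tendsto (fun m => wseq (ρ m) i) atTop (nhds (w0 i)) :=
    fun i => ((continuous_apply i).tendsto _).comp hwconv
  have hlamconv : Tendsto (fun m => lamseq (ρ m)) atTop (nhds lam0) :=
    (continuous_snd.tendsto _).comp hconv
  have hρge : ∀ m, m ≤ ρ m := by
    intro m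
    calc m ≤ ψ m := hψ.le_apply
    _ ≤ φ (ψ m) := φ.strictMono.le_apply
  have htconv : Tendsto (fun m => tseq (ρ m)) atTop (nhds 0) := by
    apply tendsto_of_tendsto_of_tendsto_of_le_of_le tendsto_const_nhds
      tendsto_one_div_add_atTop_nhds_zero_nat
    · exact fun m => (ht0 (ρ m)).le
    · intro m
      have h1 := (ht1 (ρ m)).le
      have h2 : 1 / ((ρ m : ℝ) + 1) ≤ 1 / ((m : ℝ) + 1) := by
        apply one_div_le_one_div_of_le (by positivity)
        have h3 : (m : ℝ) ≤ (ρ m : ℝ) := Nat.cast_le.mpr (hρge m)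
        linarith
      linarith
  have hwtconv : ∀ (p : Fin n × Fin n), p ∈ E →
      Tendsto (fun m => wt E (pert E r (tseq (ρ m))) p) atTop (nhds (wt E r p)) := by
    intro p hp
    have h1 : ∀ m, wt E (pert E r (tseq (ρ m))) p
        = wt E r p + (tseq (ρ m)) ^ (n * p.1.val + p.2.val + 1) := by
      intro m
      rw [wt_eq _ hp, wt_eq _ hp]
      rfl
    rw [show wt E r p = wt E r p + 0 by ring]
    refine Tendsto.congr (fun m => (h1 m).symm) (tendsto_const_nhds.add ?_)
    have h2 := htconv.pow (n * p.1.val + p.2.val + 1)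
    rwa [zero_pow (by omega)] at h2
  -- limit facts
  have L1 : ∀ i j : Fin n, i ∈ VMax → (i, j) ∈ E → wt E r (i, j) + w0 j ≤ lam0 + w0 i := by
    intro i j hi hij
    refine le_of_tendsto_of_tendsto' ((hwtconv _ hij).add (hwi j)) (hlamconv.add (hwi i)) ?_
    exact fun m => sol_ub (hsol (ρ m)) hi hij
  have L2 : ∀ i j : Fin n, i ∉ VMax → (i, j) ∈ E → lam0 + w0 i ≤ wt E r (i, j) + w0 j := by
    intro i j hi hij
    refine le_of_tendsto_of_tendsto' (hlamconv.add (hwi i)) ((hwtconv _ hij).add (hwi j)) ?_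
    exact fun m => sol_lb (hsol (ρ m)) hi hij
  have hedge : ∀ x, (x, f x) ∈ E := by
    intro x
    have := (hfprop (ρ 0) x).1
    rwa [hfconst 0] at this
  have L3 : ∀ x, lam0 + w0 x = wt E r (x, f x) + w0 (f x) := by
    intro x
    have h1 : Tendsto (fun m => lamseq (ρ m) + wseq (ρ m) x) atTop (nhds (lam0 + w0 x)) :=
      hlamconv.add (hwi x)
    have h2 : Tendsto (fun m => lamseq (ρ m) + wseq (ρ m) x) atTop
        (nhds (wt E r (x, f x) + w0 (f x))) := by
      refine Tendsto.congr (f₁ := fun m => wt E (pert E r (tseq (ρ m))) (x, f x)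
          + wseq (ρ m) (f x)) ?_ ((hwtconv _ (hedge x)).add (hwi (f x)))
      intro m
      have h3 := (hfprop (ρ m) x).2
      rw [hfconst m] at h3
      linarith
    exact tendsto_nhds_unique h1 h2
  have hSOL : IsErgodicSol E VMax r lam0 w0 := by
    intro i
    constructor
    · intro hi
      constructor
      · exact ⟨f i, hedge i, L3 i⟩
      · rintro v ⟨j, hj, rfl⟩
        exact L1 i j hi hj
    · intro hi
      constructor
      · exact ⟨f i, hedge i, L3 i⟩
      · rintro v ⟨j, hj, rfl⟩
        exact L2 i j hi hj
  refine ⟨lam0, w0, fun i => f i.1, fun i => f i.1, hSOL, ?_, ?_⟩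
  · refine ⟨fun i => hedge i.1, fun i => hedge i.1, ?_, ?_⟩
    · intro i
      exact L3 i.1 ▸ ⟨⟨f i.1, hedge i.1, L3 i.1⟩, by rintro v ⟨j, hj, rfl⟩; exact L1 i.1 j i.2 hj⟩
    · intro i
      exact L3 i.1 ▸ ⟨⟨f i.1, hedge i.1, L3 i.1⟩, by rintro v ⟨j, hj, rfl⟩; exact L2 i.1 j i.2 hj⟩
  · have hcomb : combine VMax (fun i => f i.1) (fun i => f i.1) = f := by
      funext i
      show (if h : i ∈ VMax then f i else f i) = f i
      split <;> rfl
    rw [hcomb]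
    have := hUC (ρ 0)
    rwa [hfconst 0] at this
end

section
/- Suppose the graph G is ergodic and r ∈ P^{σ,τ} for some (σ,τ) ∈ Ξ. If (i,j) ∈ E is such that i ∈ V_Min and j ≠ τ(i), then (x, r_{−ij}) ∈ P^{σ,τ} for all x > λ^{σ,τ}(r) + (u^{σ,τ}(r))_i − (u^{σ,τ}(r))_j. Analogously, if (i,j) ∈ E is such that i ∈ V_Max and j ≠ σ(i), then (x, r_{−ij}) ∈ P^{σ,τ} for all x < λ^{σ,τ}(r) + (u^{σ,τ}(r))_i − (u^{σ,τ}(r))_j. -/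
open MeasureTheory

section Aux

variable {n : ℕ} {E : Finset (Fin n × Fin n)} {VMax : Finset (Fin n)}
  {r : {e : Fin n × Fin n // e ∈ E} → ℝ}
  {σ : {i : Fin n // i ∈ VMax} → Fin n} {τ : {i : Fin n // i ∉ VMax} → Fin n}

/-- A solution of the ergodic equation such that the policy pair `(σ, τ)` is the unique
argmax/argmin at every vertex. -/
def StrictSol (E : Finset (Fin n × Fin n)) (VMax : Finset (Fin n))
    (r : {e : Fin n × Fin n // e ∈ E} → ℝ)
    (σ : {i : Fin n // i ∈ VMax} → Fin n) (τ : {i : Fin n // i ∉ VMax} → Fin n)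
    (lam : ℝ) (u : Fin n → ℝ) : Prop :=
  (∀ (i : Fin n) (h : i ∈ VMax),
      lam + u i = wt E r (i, σ ⟨i, h⟩) + u (σ ⟨i, h⟩) ∧
      ∀ k, (i, k) ∈ E → k ≠ σ ⟨i, h⟩ → wt E r (i, k) + u k < lam + u i) ∧
  (∀ (i : Fin n) (h : i ∉ VMax),
      lam + u i = wt E r (i, τ ⟨i, h⟩) + u (τ ⟨i, h⟩) ∧
      ∀ k, (i, k) ∈ E → k ≠ τ ⟨i, h⟩ → lam + u i < wt E r (i, k) + u k)

lemma exists_periodic (f : Fin n → Fin n) (x : Fin n) :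
    ∃ a : ℕ, IsPeriodicVertex f (f^[a] x) := by
  obtain ⟨a, b, hne, heq⟩ := Finite.exists_ne_map_eq_of_infinite (fun t : ℕ => f^[t] x)
  rcases hne.lt_or_gt with hab | hab
  · refine ⟨a, b - a, by omega, ?_⟩
    rw [← Function.iterate_add_apply, show b - a + a = b by omega]
    exact heq.symm
  · refine ⟨b, a - b, by omega, ?_⟩
    rw [← Function.iterate_add_apply, show a - b + b = a by omega]
    exact heq

lemma zp_sum {f : Fin n → Fin n} {lam : ℝ} {u : Fin n → ℝ}
    (hz : IsZeroPlayerSol E f r lam u) (i : Fin n) (k : ℕ) :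
    (k : ℝ) * lam + u i
      = (∑ t ∈ Finset.range k, wt E r (f^[t] i, f^[t + 1] i)) + u (f^[k] i) := by
  induction k with
  | zero => simp
  | succ k ih =>
    have h2 := hz (f^[k] i)
    rw [Finset.sum_range_succ, Function.iterate_succ_apply' f k i]
    push_cast
    linarith [ih, h2]

lemma zp_unique {f : Fin n → Fin n} (hf : HasUniqueCycle f) (x0 : Fin n)
    {lam mu : ℝ} {u v : Fin n → ℝ}
    (hu : IsZeroPlayerSol E f r lam u) (hv : IsZeroPlayerSol E f r mu v) :
    lam = mu ∧ ∃ c : ℝ, ∀ i, v i = u i + c := by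
  obtain ⟨a0, y0per⟩ := exists_periodic f x0
  obtain ⟨p, hp, hpy⟩ := y0per
  have hlam : lam = mu := by
    have h1 := zp_sum hu (f^[a0] x0) p
    have h2 := zp_sum hv (f^[a0] x0) p
    rw [hpy] at h1 h2
    have h3 : (p : ℝ) * lam = (p : ℝ) * mu := by linarith
    have hp' : (0 : ℝ) < (p : ℝ) := by exact_mod_cast hp
    exact mul_left_cancel₀ (ne_of_gt hp') h3
  subst hlam
  have hstep : ∀ i, v (f i) - u (f i) = v i - u i := by
    intro i
    linarith [hu i, hv i]
  have hiter : ∀ (k : ℕ) (i : Fin n), v (f^[k] i) - u (f^[k] i) = v i - u i := by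
    intro k
    induction k with
    | zero => intro i; simp
    | succ k ih =>
      intro i
      rw [Function.iterate_succ_apply', hstep]
      exact ih i
  refine ⟨rfl, v (f^[a0] x0) - u (f^[a0] x0), fun i => ?_⟩
  obtain ⟨a, haper⟩ := exists_periodic f i
  obtain ⟨k, hk⟩ := hf (f^[a] i) (f^[a0] x0) haper ⟨p, hp, hpy⟩
  have h1 : v (f^[a] i) - u (f^[a] i) = v i - u i := hiter a i
  have h2 := hiter k (f^[a] i)
  rw [hk] at h2
  linarith

lemma induces_zp {lam : ℝ} {u : Fin n → ℝ}
    (he : IsErgodicSol E VMax r lam u) (hi : Induces E VMax r u σ τ) :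
    IsZeroPlayerSol E (combine VMax σ τ) r lam u := by
  intro i
  by_cases h : i ∈ VMax
  · have h1 := (he i).1 h
    have h2 := hi.2.2.1 ⟨i, h⟩
    simp only [combine, dif_pos h]
    exact h1.unique h2
  · have h1 := (he i).2 h
    have h2 := hi.2.2.2 ⟨i, h⟩
    simp only [combine, dif_neg h]
    exact h1.unique h2

lemma strict_mem_Pcell (x0 : Fin n) (hXi : InXi E VMax σ τ) {lam : ℝ} {u : Fin n → ℝ}
    (hs : StrictSol E VMax r σ τ lam u) : r ∈ Pcell E VMax σ τ := by
  obtain ⟨hσp, hτp, hcyc⟩ := hXi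
  have herg : IsErgodicSol E VMax r lam u := by
    intro i
    constructor
    · intro h
      refine ⟨⟨σ ⟨i, h⟩, hσp ⟨i, h⟩, (hs.1 i h).1⟩, ?_⟩
      rintro val ⟨k, hk, rfl⟩
      by_cases hks : k = σ ⟨i, h⟩
      · subst hks; exact le_of_eq (hs.1 i h).1.symm
      · exact le_of_lt ((hs.1 i h).2 k hk hks)
    · intro h
      refine ⟨⟨τ ⟨i, h⟩, hτp ⟨i, h⟩, (hs.2 i h).1⟩, ?_⟩
      rintro val ⟨k, hk, rfl⟩
      by_cases hks : k = τ ⟨i, h⟩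
      · subst hks; exact le_of_eq (hs.2 i h).1
      · exact le_of_lt ((hs.2 i h).2 k hk hks)
  have hind : Induces E VMax r u σ τ := by
    refine ⟨hσp, hτp, fun i => ?_, fun i => ?_⟩
    · have h1 := (herg i.1).1 i.2
      rwa [(hs.1 i.1 i.2).1] at h1
    · have h1 := (herg i.1).2 i.2
      rwa [(hs.2 i.1 i.2).1] at h1
  refine ⟨⟨lam, u, herg, hind⟩, ?_⟩
  rintro σ' τ' ⟨mu, v, hv, hind'⟩
  have : Nonempty (Fin n) := ⟨x0⟩
  set f := combine VMax σ τ with hf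
  have hwu : ∀ (a : Fin n) (h : a ∈ VMax),
      mu + v a = wt E r (a, σ' ⟨a, h⟩) + v (σ' ⟨a, h⟩) :=
    fun a h => ((hv a).1 h).unique (hind'.2.2.1 ⟨a, h⟩)
  have hwl : ∀ (a : Fin n) (h : a ∉ VMax),
      mu + v a = wt E r (a, τ' ⟨a, h⟩) + v (τ' ⟨a, h⟩) :=
    fun a h => ((hv a).2 h).unique (hind'.2.2.2 ⟨a, h⟩)
  have hub : ∀ (a k : Fin n) (h : a ∈ VMax), (a, k) ∈ E →
      wt E r (a, k) + u k ≤ lam + u a := by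
    intro a k h hk
    by_cases hks : k = σ ⟨a, h⟩
    · subst hks; exact le_of_eq (hs.1 a h).1.symm
    · exact le_of_lt ((hs.1 a h).2 k hk hks)
  have hlb : ∀ (a k : Fin n) (h : a ∉ VMax), (a, k) ∈ E →
      lam + u a ≤ wt E r (a, k) + u k := by
    intro a k h hk
    by_cases hks : k = τ ⟨a, h⟩
    · subst hks; exact le_of_eq (hs.2 a h).1
    · exact le_of_lt ((hs.2 a h).2 k hk hks)
  have hvub : ∀ (a k : Fin n), a ∈ VMax → (a, k) ∈ E →
      wt E r (a, k) + v k ≤ mu + v a :=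
    fun a k h hk => ((hv a).1 h).2 ⟨k, hk, rfl⟩
  have hvlb : ∀ (a k : Fin n), a ∉ VMax → (a, k) ∈ E →
      mu + v a ≤ wt E r (a, k) + v k :=
    fun a k h hk => ((hv a).2 h).2 ⟨k, hk, rfl⟩
  obtain ⟨iM, hiM⟩ := Finite.exists_max (fun a => v a - u a)
  obtain ⟨im, him⟩ := Finite.exists_min (fun a => v a - u a)
  have hmu : mu = lam := by
    have h1 : mu ≤ lam := by
      by_cases h : iM ∈ VMax
      · have e1 := hwu iM h
        have e2 := hub iM (σ' ⟨iM, h⟩) h (hind'.1 ⟨iM, h⟩)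
        have e3 := hiM (σ' ⟨iM, h⟩)
        linarith
      · have e1 := hvlb iM (τ ⟨iM, h⟩) h (hτp ⟨iM, h⟩)
        have e2 := (hs.2 iM h).1
        have e3 := hiM (τ ⟨iM, h⟩)
        linarith
    have h2 : lam ≤ mu := by
      by_cases h : im ∈ VMax
      · have e1 := hvub im (σ ⟨im, h⟩) h (hσp ⟨im, h⟩)
        have e2 := (hs.1 im h).1
        have e3 := him (σ ⟨im, h⟩)
        linarith
      · have e1 := hwl im h
        have e2 := hlb im (τ' ⟨im, h⟩) h (hind'.2.1 ⟨im, h⟩)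
        have e3 := him (τ' ⟨im, h⟩)
        linarith
    linarith
  subst hmu
  -- the argmax set of v - u is invariant under f
  have hAinv : ∀ a, v a - u a = v iM - u iM → v (f a) - u (f a) = v iM - u iM := by
    intro a ha
    by_cases h : a ∈ VMax
    · have e1 := hwu a h
      have hbe : (a, σ' ⟨a, h⟩) ∈ E := hind'.1 ⟨a, h⟩
      have e2 := hub a (σ' ⟨a, h⟩) h hbe
      have e3 := hiM (σ' ⟨a, h⟩)
      have hwb : v (σ' ⟨a, h⟩) - u (σ' ⟨a, h⟩) = v iM - u iM := by linarith
      have he2 : wt E r (a, σ' ⟨a, h⟩) + u (σ' ⟨a, h⟩) = mu + u a := by linarith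
      have hbs : σ' ⟨a, h⟩ = σ ⟨a, h⟩ := by
        by_contra hc
        exact absurd he2 (ne_of_lt ((hs.1 a h).2 _ hbe hc))
      have hfa : f a = σ ⟨a, h⟩ := by simp only [hf, combine, dif_pos h]
      rw [hfa, ← hbs]
      exact hwb
    · have e1 := hvlb a (τ ⟨a, h⟩) h (hτp ⟨a, h⟩)
      have e2 := (hs.2 a h).1
      have e3 := hiM (τ ⟨a, h⟩)
      have hfa : f a = τ ⟨a, h⟩ := by simp only [hf, combine, dif_neg h]
      rw [hfa]
      linarith
  -- the argmin set of v - u is invariant under f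
  have hBinv : ∀ a, v a - u a = v im - u im → v (f a) - u (f a) = v im - u im := by
    intro a ha
    by_cases h : a ∈ VMax
    · have e1 := hvub a (σ ⟨a, h⟩) h (hσp ⟨a, h⟩)
      have e2 := (hs.1 a h).1
      have e3 := him (σ ⟨a, h⟩)
      have hfa : f a = σ ⟨a, h⟩ := by simp only [hf, combine, dif_pos h]
      rw [hfa]
      linarith
    · have e1 := hwl a h
      have hbe : (a, τ' ⟨a, h⟩) ∈ E := hind'.2.1 ⟨a, h⟩
      have e2 := hlb a (τ' ⟨a, h⟩) h hbe
      have e3 := him (τ' ⟨a, h⟩)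
      have hwb : v (τ' ⟨a, h⟩) - u (τ' ⟨a, h⟩) = v im - u im := by linarith
      have he2 : wt E r (a, τ' ⟨a, h⟩) + u (τ' ⟨a, h⟩) = mu + u a := by linarith
      have hbs : τ' ⟨a, h⟩ = τ ⟨a, h⟩ := by
        by_contra hc
        exact absurd he2 (fun hh => (ne_of_lt ((hs.2 a h).2 _ hbe hc)) hh.symm)
      have hfa : f a = τ ⟨a, h⟩ := by simp only [hf, combine, dif_neg h]
      rw [hfa, ← hbs]
      exact hwb
  have hAiter : ∀ (k : ℕ) (a : Fin n), v a - u a = v iM - u iM →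
      v (f^[k] a) - u (f^[k] a) = v iM - u iM := by
    intro k
    induction k with
    | zero => intro a ha; simpa using ha
    | succ k ih =>
      intro a ha
      rw [Function.iterate_succ_apply']
      exact hAinv _ (ih a ha)
  have hBiter : ∀ (k : ℕ) (a : Fin n), v a - u a = v im - u im →
      v (f^[k] a) - u (f^[k] a) = v im - u im := by
    intro k
    induction k with
    | zero => intro a ha; simpa using ha
    | succ k ih =>
      intro a ha
      rw [Function.iterate_succ_apply']
      exact hBinv _ (ih a ha)
  -- the two invariant sets meet on the unique cycle, hence v - u is constant
  obtain ⟨aM, hMper⟩ := exists_periodic f iM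
  obtain ⟨am, hmper⟩ := exists_periodic f im
  obtain ⟨k, hk⟩ := hcyc (f^[am] im) (f^[aM] iM) hmper hMper
  have hMm : v iM - u iM = v im - u im := by
    have h1 : v (f^[aM] iM) - u (f^[aM] iM) = v iM - u iM := hAiter aM iM rfl
    have h2 : v (f^[am] im) - u (f^[am] im) = v im - u im := hBiter am im rfl
    have h3 := hBiter k (f^[am] im) h2
    rw [hk] at h3
    linarith
  have hconst : ∀ a, v a - u a = v iM - u iM := by
    intro a
    have h1 := hiM a
    have h2 := him a
    linarith
  constructor
  · funext i
    have e1 := hwu i.1 i.2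
    have hbe : (i.1, σ' ⟨i.1, i.2⟩) ∈ E := hind'.1 ⟨i.1, i.2⟩
    have c1 := hconst (σ' ⟨i.1, i.2⟩)
    have c2 := hconst i.1
    have heq : wt E r (i.1, σ' ⟨i.1, i.2⟩) + u (σ' ⟨i.1, i.2⟩) = mu + u i.1 := by linarith
    by_contra hc
    have hc' : σ' ⟨i.1, i.2⟩ ≠ σ ⟨i.1, i.2⟩ := hc
    exact absurd heq (ne_of_lt ((hs.1 i.1 i.2).2 _ hbe hc'))
  · funext i
    have e1 := hwl i.1 i.2
    have hbe : (i.1, τ' ⟨i.1, i.2⟩) ∈ E := hind'.2.1 ⟨i.1, i.2⟩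
    have c1 := hconst (τ' ⟨i.1, i.2⟩)
    have c2 := hconst i.1
    have heq : wt E r (i.1, τ' ⟨i.1, i.2⟩) + u (τ' ⟨i.1, i.2⟩) = mu + u i.1 := by linarith
    by_contra hc
    have hc' : τ' ⟨i.1, i.2⟩ ≠ τ ⟨i.1, i.2⟩ := hc
    exact absurd heq (fun hh => (ne_of_lt ((hs.2 i.1 i.2).2 _ hbe hc')) hh.symm)

lemma pcell_strict (x0 : Fin n) (hXi : InXi E VMax σ τ) (hr : r ∈ Pcell E VMax σ τ)
    {lam : ℝ} {u : Fin n → ℝ}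
    (hnorm : IsNormalizedSol E (combine VMax σ τ) r lam u) :
    StrictSol E VMax r σ τ lam u := by
  obtain ⟨⟨lam0, u0, hv, hind⟩, huniq⟩ := hr
  have hzp0 : IsZeroPlayerSol E (combine VMax σ τ) r lam0 u0 := induces_zp hv hind
  obtain ⟨hlam, c, hc⟩ := zp_unique hXi.2.2 x0 hnorm.1 hzp0
  subst hlam
  have hmaxeq : ∀ (i : Fin n) (h : i ∈ VMax),
      lam + u0 i = wt E r (i, σ ⟨i, h⟩) + u0 (σ ⟨i, h⟩) := by
    intro i h
    have h1 := hzp0 i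
    simpa only [combine, dif_pos h] using h1
  have hmineq : ∀ (i : Fin n) (h : i ∉ VMax),
      lam + u0 i = wt E r (i, τ ⟨i, h⟩) + u0 (τ ⟨i, h⟩) := by
    intro i h
    have h1 := hzp0 i
    simpa only [combine, dif_neg h] using h1
  have hmaxlt : ∀ (i : Fin n) (h : i ∈ VMax) (k : Fin n), (i, k) ∈ E → k ≠ σ ⟨i, h⟩ →
      wt E r (i, k) + u0 k < lam + u0 i := by
    intro i h k hk hkne
    have hle : wt E r (i, k) + u0 k ≤ lam + u0 i := ((hv i).1 h).2 ⟨k, hk, rfl⟩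
    rcases hle.lt_or_eq with hlt | heq
    · exact hlt
    · exfalso
      set σ'' : {i : Fin n // i ∈ VMax} → Fin n := Function.update σ ⟨i, h⟩ k with hσ''
      have hb : BiasInduced E VMax r σ'' τ := by
        refine ⟨lam, u0, hv, ?_, hind.2.1, ?_, hind.2.2.2⟩
        · intro i'
          by_cases hi' : i' = ⟨i, h⟩
          · subst hi'
            simp only [hσ'', Function.update_self]
            exact hk
          · simp only [hσ'', Function.update_of_ne hi']
            exact hind.1 i'
        · intro i'
          by_cases hi' : i' = ⟨i, h⟩
          · subst hi'
            simp only [hσ'', Function.update_self]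
            rw [heq]
            exact (hv i).1 h
          · simp only [hσ'', Function.update_of_ne hi']
            exact hind.2.2.1 i'
      have hss := (huniq σ'' τ hb).1
      apply hkne
      rw [← hss]
      simp [hσ'']
  have hminlt : ∀ (i : Fin n) (h : i ∉ VMax) (k : Fin n), (i, k) ∈ E → k ≠ τ ⟨i, h⟩ →
      lam + u0 i < wt E r (i, k) + u0 k := by
    intro i h k hk hkne
    have hle : lam + u0 i ≤ wt E r (i, k) + u0 k := ((hv i).2 h).2 ⟨k, hk, rfl⟩
    rcases hle.lt_or_eq with hlt | heq
    · exact hlt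
    · exfalso
      set τ'' : {i : Fin n // i ∉ VMax} → Fin n := Function.update τ ⟨i, h⟩ k with hτ''
      have hb : BiasInduced E VMax r σ τ'' := by
        refine ⟨lam, u0, hv, hind.1, ?_, hind.2.2.1, ?_⟩
        · intro i'
          by_cases hi' : i' = ⟨i, h⟩
          · subst hi'
            simp only [hτ'', Function.update_self]
            exact hk
          · simp only [hτ'', Function.update_of_ne hi']
            exact hind.2.1 i'
        · intro i'
          by_cases hi' : i' = ⟨i, h⟩
          · subst hi'
            simp only [hτ'', Function.update_self]
            rw [← heq]
            exact (hv i).2 h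
          · simp only [hτ'', Function.update_of_ne hi']
            exact hind.2.2.2 i'
      have hss := (huniq σ τ'' hb).2
      apply hkne
      rw [← hss]
      simp [hτ'']
  constructor
  · intro i h
    refine ⟨?_, fun k hk hkne => ?_⟩
    · have e1 := hmaxeq i h
      have h1 := hc i
      have h2 := hc (σ ⟨i, h⟩)
      linarith
    · have e1 := hmaxlt i h k hk hkne
      have h1 := hc i
      have h2 := hc k
      linarith
  · intro i h
    refine ⟨?_, fun k hk hkne => ?_⟩
    · have e1 := hmineq i h
      have h1 := hc i
      have h2 := hc (τ ⟨i, h⟩)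
      linarith
    · have e1 := hminlt i h k hk hkne
      have h1 := hc i
      have h2 := hc k
      linarith

lemma wt_update_ne {x : ℝ} {p q : Fin n × Fin n} (hq : q ∈ E) (hpq : p ≠ q) :
    wt E (Function.update r ⟨q, hq⟩ x) p = wt E r p := by
  unfold wt
  split
  · rw [Function.update_of_ne (fun hh => hpq (congrArg Subtype.val hh))]
  · rfl

lemma wt_update_self {x : ℝ} {q : Fin n × Fin n} (hq : q ∈ E) :
    wt E (Function.update r ⟨q, hq⟩ x) q = x := by
  unfold wt
  rw [dif_pos hq, Function.update_self]

end Aux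

/-- Stability of the cell `P^{σ,τ}` under one-sided modification of the
weight of an edge unused by `(σ,τ)`: for a Min edge, increasing the weight beyond
`λ^{σ,τ}(r) + u^{σ,τ}(r)_i − u^{σ,τ}(r)_j` keeps us in the cell, and symmetrically for
Max. Here `(lam, u)` is the normalized solution characterizing
`(λ^{σ,τ}(r), u^{σ,τ}(r))`. -/
theorem stmt12 (n : ℕ) (E : Finset (Fin n × Fin n)) (VMax : Finset (Fin n))
    (hout : ∀ i : Fin n, ∃ j : Fin n, (i, j) ∈ E)
    (herg : IsErgodicGraph E VMax)
    (σ : {i : Fin n // i ∈ VMax} → Fin n) (τ : {i : Fin n // i ∉ VMax} → Fin n)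
    (hXi : InXi E VMax σ τ)
    (r : {e : Fin n × Fin n // e ∈ E} → ℝ) (hr : r ∈ Pcell E VMax σ τ)
    (lam : ℝ) (u : Fin n → ℝ)
    (hnorm : IsNormalizedSol E (combine VMax σ τ) r lam u) :
    ∀ (i j : Fin n) (he : (i, j) ∈ E),
      (∀ h : i ∉ VMax, τ ⟨i, h⟩ ≠ j → ∀ x : ℝ, lam + u i - u j < x →
        Function.update r ⟨(i, j), he⟩ x ∈ Pcell E VMax σ τ) ∧
      (∀ h : i ∈ VMax, σ ⟨i, h⟩ ≠ j → ∀ x : ℝ, x < lam + u i - u j →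
        Function.update r ⟨(i, j), he⟩ x ∈ Pcell E VMax σ τ) := by
  intro i j he
  have hs := pcell_strict i hXi hr hnorm
  constructor
  · -- Min case
    intro h hne x hx
    apply strict_mem_Pcell i hXi (lam := lam) (u := u)
    constructor
    · intro a ha
      have hai : a ≠ i := fun hh => h (hh ▸ ha)
      refine ⟨?_, fun k hk hkne => ?_⟩
      · rw [wt_update_ne he (fun hh => hai (congrArg Prod.fst hh))]
        exact (hs.1 a ha).1
      · rw [wt_update_ne he (fun hh => hai (congrArg Prod.fst hh))]
        exact (hs.1 a ha).2 k hk hkne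
    · intro a ha
      refine ⟨?_, fun k hk hkne => ?_⟩
      · have hne1 : (a, τ ⟨a, ha⟩) ≠ (i, j) := by
          intro hh
          have h1 : a = i := congrArg Prod.fst hh
          subst h1
          exact hne (congrArg Prod.snd hh)
        rw [wt_update_ne he hne1]
        exact (hs.2 a ha).1
      · by_cases hpq : (a, k) = (i, j)
        · have h1 : a = i := congrArg Prod.fst hpq
          have h2 : k = j := congrArg Prod.snd hpq
          subst h1; subst h2
          rw [wt_update_self he]
          linarith
        · rw [wt_update_ne he hpq]
          exact (hs.2 a ha).2 k hk hkne
  · -- Max case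
    intro h hne x hx
    apply strict_mem_Pcell i hXi (lam := lam) (u := u)
    constructor
    · intro a ha
      refine ⟨?_, fun k hk hkne => ?_⟩
      · have hne1 : (a, σ ⟨a, ha⟩) ≠ (i, j) := by
          intro hh
          have h1 : a = i := congrArg Prod.fst hh
          subst h1
          exact hne (congrArg Prod.snd hh)
        rw [wt_update_ne he hne1]
        exact (hs.1 a ha).1
      · by_cases hpq : (a, k) = (i, j)
        · have h1 : a = i := congrArg Prod.fst hpq
          have h2 : k = j := congrArg Prod.snd hpq
          subst h1; subst h2
          rw [wt_update_self he]
          linarith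
        · rw [wt_update_ne he hpq]
          exact (hs.1 a ha).2 k hk hkne
    · intro a ha
      have hai : a ≠ i := fun hh => ha (hh ▸ h)
      refine ⟨?_, fun k hk hkne => ?_⟩
      · rw [wt_update_ne he (fun hh => hai (congrArg Prod.fst hh))]
        exact (hs.2 a ha).1
      · rw [wt_update_ne he (fun hh => hai (congrArg Prod.fst hh))]
        exact (hs.2 a ha).2 k hk hkne
end

section
/- Suppose the graph G is ergodic and consider the random model. For every α > 0, the probability that there exists an edge (i,j) ∈ E with Z_{ij}(r) ∈ ℝ and |r_{ij} − Z_{ij}(r)| ≤ α is at most 2α·m·φ. -/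
open MeasureTheory

/-- The threshold `Z_e(r)` in the extended reals: for an edge `e = (i,j)` with `i`
controlled by Min, the infimum of the `x` such that `(x, r₋ₑ) ∈ U` and the unique pair of
bias-induced policies `(σ,τ) ∈ Ξ` of the MPG with weights `(x, r₋ₑ)` satisfies `τ(i) ≠ j`;
for `i` controlled by Max, the corresponding supremum with `σ(i) ≠ j`. -/
noncomputable def Zedge {n : ℕ} (E : Finset (Fin n × Fin n)) (VMax : Finset (Fin n))
    (e : {e : Fin n × Fin n // e ∈ E}) (r : {e : Fin n × Fin n // e ∈ E} → ℝ) : EReal :=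
  if h : e.1.1 ∈ VMax then
    sSup {x : EReal | ∃ x' : ℝ, x = (x' : EReal) ∧
      ∃ (σ : {i : Fin n // i ∈ VMax} → Fin n) (τ : {i : Fin n // i ∉ VMax} → Fin n),
        InXi E VMax σ τ ∧ Function.update r e x' ∈ Pcell E VMax σ τ ∧
        σ ⟨e.1.1, h⟩ ≠ e.1.2}
  else
    sInf {x : EReal | ∃ x' : ℝ, x = (x' : EReal) ∧
      ∃ (σ : {i : Fin n // i ∈ VMax} → Fin n) (τ : {i : Fin n // i ∉ VMax} → Fin n),
        InXi E VMax σ τ ∧ Function.update r e x' ∈ Pcell E VMax σ τ ∧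
        τ ⟨e.1.1, h⟩ ≠ e.1.2}


namespace Stmt13Aux

open Set Filter Topology

variable {n : ℕ} {E : Finset (Fin n × Fin n)} {VMax : Finset (Fin n)}

/-- The sum of absolute values of all weights. -/
noncomputable def Mr (E : Finset (Fin n × Fin n)) (r : {e : Fin n × Fin n // e ∈ E} → ℝ) : ℝ :=
  ∑ e : {e : Fin n × Fin n // e ∈ E}, |r e|

lemma Mr_nonneg (r : {e : Fin n × Fin n // e ∈ E} → ℝ) : 0 ≤ Mr E r :=
  Finset.sum_nonneg fun _ _ => abs_nonneg _

lemma abs_wt_le (r : {e : Fin n × Fin n // e ∈ E} → ℝ) (p : Fin n × Fin n) :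
    |wt E r p| ≤ Mr E r := by
  unfold wt
  by_cases h : p ∈ E
  · rw [dif_pos h]
    exact Finset.single_le_sum (f := fun e : {e : Fin n × Fin n // e ∈ E} => |r e|)
      (fun _ _ => abs_nonneg _) (Finset.mem_univ (⟨p, h⟩ : {e : Fin n × Fin n // e ∈ E}))
  · rw [dif_neg h]
    simpa using Mr_nonneg r

lemma mem_outVals_of_sol {r : {e : Fin n × Fin n // e ∈ E} → ℝ} {lam : ℝ} {u : Fin n → ℝ}
    (h : IsErgodicSol E VMax r lam u) (i : Fin n) :
    lam + u i ∈ outVals E r u i := by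
  by_cases hi : i ∈ VMax
  · exact ((h i).1 hi).1
  · exact ((h i).2 hi).1

lemma abs_lam_le [Nonempty (Fin n)] {r : {e : Fin n × Fin n // e ∈ E} → ℝ} {lam : ℝ}
    {u : Fin n → ℝ} (h : IsErgodicSol E VMax r lam u) : |lam| ≤ Mr E r := by
  obtain ⟨ip, -, hip⟩ := Finset.exists_max_image Finset.univ u Finset.univ_nonempty
  obtain ⟨im, -, him⟩ := Finset.exists_min_image Finset.univ u Finset.univ_nonempty
  rw [abs_le]
  constructor
  · obtain ⟨j, hj, heq⟩ := mem_outVals_of_sol h im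
    have h1 : -Mr E r ≤ wt E r (im, j) := neg_le_of_abs_le (abs_wt_le r _)
    have h2 : u im ≤ u j := him j (Finset.mem_univ j)
    linarith
  · obtain ⟨j, hj, heq⟩ := mem_outVals_of_sol h ip
    have h1 : wt E r (ip, j) ≤ Mr E r := le_of_abs_le (abs_wt_le r _)
    have h2 : u j ≤ u ip := hip j (Finset.mem_univ j)
    linarith

end Stmt13Aux

namespace Stmt13Aux

open Set Filter Topology MeasureTheory
open scoped ENNReal NNReal

variable {n : ℕ} {E : Finset (Fin n × Fin n)} {VMax : Finset (Fin n)}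

lemma compress [Nonempty (Fin n)] {r : {e : Fin n × Fin n // e ∈ E} → ℝ} {lam : ℝ}
    {u : Fin n → ℝ} {σ : {i : Fin n // i ∈ VMax} → Fin n} {τ : {i : Fin n // i ∉ VMax} → Fin n}
    (hsol : IsErgodicSol E VMax r lam u) (hind : Induces E VMax r u σ τ)
    (hlam : |lam| ≤ Mr E r) :
    ∃ u' : Fin n → ℝ, IsErgodicSol E VMax r lam u' ∧ Induces E VMax r u' σ τ ∧
      ∀ i, |u' i| ≤ n * (2 * Mr E r + 1) := by
  classical
  set M := Mr E r with hM
  have hM0 : 0 ≤ M := Mr_nonneg r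
  set D : ℝ := 2 * M + 1 with hD
  have hD0 : 0 < D := by rw [hD]; linarith
  obtain ⟨im, -, him⟩ := Finset.exists_min_image Finset.univ u Finset.univ_nonempty
  set c : ℝ := u im with hc
  have hcle : ∀ i, c ≤ u i := fun i => him i (Finset.mem_univ i)
  set N : Set ℝ := ⋃ j : Fin n, Icc (u j - D) (u j) with hN
  have hNmeas : MeasurableSet N := MeasurableSet.iUnion fun j => measurableSet_Icc
  have hNvol : volume N ≤ (n : ℝ≥0∞) * ENNReal.ofReal D := by
    calc volume N ≤ ∑' j : Fin n, volume (Icc (u j - D) (u j)) := measure_iUnion_le _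
    _ = ∑' _j : Fin n, ENNReal.ofReal D := by
          congr 1; funext j; rw [Real.volume_Icc]; congr 1; ring
    _ = (n : ℝ≥0∞) * ENNReal.ofReal D := by
          rw [tsum_fintype]
          simp [Finset.sum_const, nsmul_eq_mul]
  have hfin : (n : ℝ≥0∞) * ENNReal.ofReal D ≠ ⊤ :=
    ENNReal.mul_ne_top (ENNReal.natCast_ne_top n) ENNReal.ofReal_ne_top
  have hNne : volume N ≠ ⊤ := fun h => hfin (top_le_iff.mp (h ▸ hNvol))
  set W : ℝ → ℝ≥0∞ := fun x => volume (N ∩ Ioc c x) with hW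
  have hWne : ∀ x, W x ≠ ⊤ := by
    intro x h
    exact hNne (top_le_iff.mp (h ▸ measure_mono inter_subset_left))
  set v : Fin n → ℝ := fun i => (W (u i)).toReal with hv
  have hstep : ∀ {a b : Fin n}, u b ≤ u a →
      W (u a) = W (u b) + volume (N ∩ Ioc (u b) (u a)) := by
    intro a b hba
    have hsplit : N ∩ Ioc c (u a) = (N ∩ Ioc c (u b)) ∪ (N ∩ Ioc (u b) (u a)) := by
      rw [← inter_union_distrib_left, Ioc_union_Ioc_eq_Ioc (hcle b) hba]
    show volume (N ∩ Ioc c (u a)) = volume (N ∩ Ioc c (u b)) + volume (N ∩ Ioc (u b) (u a))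
    rw [hsplit, measure_union ((Ioc_disjoint_Ioc_of_le le_rfl).mono inter_subset_right inter_subset_right)
      (hNmeas.inter measurableSet_Ioc)]
  have hsubN : ∀ a : Fin n, Ioc (u a - D) (u a) ⊆ N := by
    intro a t ht
    exact mem_iUnion.mpr ⟨a, Ioc_subset_Icc_self ht⟩
  have T1 : ∀ a b : Fin n, u b ≤ u a → u a - u b ≤ D → v a - v b = u a - u b := by
    intro a b hba hle
    have hpiece : N ∩ Ioc (u b) (u a) = Ioc (u b) (u a) := by
      apply inter_eq_self_of_subset_right
      intro t ht
      exact hsubN a ⟨lt_of_le_of_lt (by linarith) ht.1, ht.2⟩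
    have hWa : W (u a) = W (u b) + ENNReal.ofReal (u a - u b) := by
      rw [hstep hba, hpiece, Real.volume_Ioc]
    show (W (u a)).toReal - (W (u b)).toReal = u a - u b
    rw [hWa, ENNReal.toReal_add (hWne _) ENNReal.ofReal_ne_top,
      ENNReal.toReal_ofReal (by linarith)]
    ring
  have T2 : ∀ a b : Fin n, D < u a - u b → D ≤ v a - v b := by
    intro a b hgt
    have hba : u b ≤ u a := by linarith
    have hsub : Ioc (u a - D) (u a) ⊆ N ∩ Ioc (u b) (u a) := by
      intro t ht
      exact ⟨hsubN a ht, ⟨lt_of_le_of_lt (by linarith) ht.1, ht.2⟩⟩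
    have hge : ENNReal.ofReal D ≤ volume (N ∩ Ioc (u b) (u a)) := by
      calc ENNReal.ofReal D = volume (Ioc (u a - D) (u a)) := by
            rw [Real.volume_Ioc]; congr 1; ring
      _ ≤ _ := measure_mono hsub
    have hle2 : W (u b) + ENNReal.ofReal D ≤ W (u a) := by
      rw [hstep hba]; exact add_le_add le_rfl hge
    have h2 : (W (u b) + ENNReal.ofReal D).toReal ≤ (W (u a)).toReal :=
      ENNReal.toReal_mono (hWne _) hle2
    rw [ENNReal.toReal_add (hWne _) ENNReal.ofReal_ne_top, ENNReal.toReal_ofReal hD0.le] at h2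
    show D ≤ (W (u a)).toReal - (W (u b)).toReal
    linarith
  have TEq : ∀ a b : Fin n, |u a - u b| ≤ D → v a - v b = u a - u b := by
    intro a b habs
    rcases le_total (u b) (u a) with hba | hab
    · exact T1 a b hba (le_of_abs_le habs)
    · have h1 : u b - u a ≤ D := le_of_abs_le (by rwa [abs_sub_comm] at habs)
      have := T1 b a hab h1
      linarith
  have TLe : ∀ (a b : Fin n) (t : ℝ), |t| < D → u a - u b ≤ t → v a - v b ≤ t := by
    intro a b t ht hle
    rcases le_or_gt (-D) (u a - u b) with h1 | h1
    · have habs : |u a - u b| ≤ D := abs_le.mpr ⟨h1, le_trans hle (le_trans (le_abs_self t) ht.le)⟩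
      rw [TEq a b habs]; exact hle
    · have h2 : D < u b - u a := by linarith
      have h3 := T2 b a h2
      have ht' : -D ≤ t := by have := neg_abs_le t; linarith
      linarith
  have habs_sub : ∀ x y : ℝ, |x - y| ≤ |x| + |y| := by
    intro x y
    calc |x - y| = |x + -y| := by rw [sub_eq_add_neg]
    _ ≤ |x| + |-y| := abs_add_le x (-y)
    _ = |x| + |y| := by rw [abs_neg]
  have key_le : ∀ (a b : Fin n) (w1 w2 : ℝ), |w1| ≤ M → |w2| ≤ M →
      w1 + u b ≤ w2 + u a → w1 + v b ≤ w2 + v a := by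
    intro a b w1 w2 h1 h2 hle
    have habs : |w2 - w1| < D := by
      have := habs_sub w2 w1
      rw [hD]; linarith
    have := TLe b a (w2 - w1) habs (by linarith)
    linarith
  have key_eq : ∀ (a b : Fin n) (w1 w2 : ℝ), |w1| ≤ M → |w2| ≤ M →
      w1 + u b = w2 + u a → w1 + v b = w2 + v a := by
    intro a b w1 w2 h1 h2 heq
    have habs : |u b - u a| ≤ D := by
      have he : u b - u a = w2 - w1 := by linarith
      have := habs_sub w2 w1
      rw [he, hD]; linarith
    have := TEq b a habs
    linarith
  have hwtM : ∀ p, |wt E r p| ≤ M := fun p => abs_wt_le r p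
  have hsol' : IsErgodicSol E VMax r lam v := by
    intro i
    constructor
    · intro hi
      obtain ⟨hmem, hub⟩ := (hsol i).1 hi
      constructor
      · obtain ⟨j, hj, heq⟩ := hmem
        exact ⟨j, hj, (key_eq i j (wt E r (i, j)) lam (hwtM _) hlam heq.symm).symm⟩
      · rintro x ⟨j, hj, rfl⟩
        exact key_le i j (wt E r (i, j)) lam (hwtM _) hlam (hub ⟨j, hj, rfl⟩)
    · intro hi
      obtain ⟨hmem, hlb⟩ := (hsol i).2 hi
      constructor
      · obtain ⟨j, hj, heq⟩ := hmem
        exact ⟨j, hj, (key_eq i j (wt E r (i, j)) lam (hwtM _) hlam heq.symm).symm⟩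
      · rintro x ⟨j, hj, rfl⟩
        exact key_le j i lam (wt E r (i, j)) hlam (hwtM _) (hlb ⟨j, hj, rfl⟩)
  have hind' : Induces E VMax r v σ τ := by
    obtain ⟨hσ, hτ, hmax, hmin⟩ := hind
    refine ⟨hσ, hτ, ?_, ?_⟩
    · intro i
      refine ⟨⟨σ i, hσ i, rfl⟩, ?_⟩
      rintro x ⟨j, hj, rfl⟩
      exact key_le (σ i) j _ _ (hwtM _) (hwtM _) ((hmax i).2 ⟨j, hj, rfl⟩)
    · intro i
      refine ⟨⟨τ i, hτ i, rfl⟩, ?_⟩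
      rintro x ⟨j, hj, rfl⟩
      exact key_le j (τ i) _ _ (hwtM _) (hwtM _) ((hmin i).2 ⟨j, hj, rfl⟩)
  have hbnd : ∀ i, |v i| ≤ n * (2 * M + 1) := by
    intro i
    have h0 : (0 : ℝ) ≤ v i := ENNReal.toReal_nonneg
    have h1 : W (u i) ≤ (n : ℝ≥0∞) * ENNReal.ofReal D :=
      le_trans (measure_mono inter_subset_left) hNvol
    have h2 : v i ≤ ((n : ℝ≥0∞) * ENNReal.ofReal D).toReal :=
      ENNReal.toReal_mono hfin h1
    rw [ENNReal.toReal_mul, ENNReal.toReal_natCast, ENNReal.toReal_ofReal hD0.le] at h2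
    rw [abs_of_nonneg h0]
    rw [hD] at h2
    exact h2
  exact ⟨v, hsol', hind', hbnd⟩

end Stmt13Aux

namespace Stmt13Aux

open Set Filter Topology MeasureTheory
open scoped ENNReal NNReal

variable {n : ℕ} {E : Finset (Fin n × Fin n)} {VMax : Finset (Fin n)}

lemma continuous_wt (q : Fin n × Fin n) :
    Continuous fun r : {e : Fin n × Fin n // e ∈ E} → ℝ => wt E r q := by
  unfold wt
  by_cases h : q ∈ E
  · simp only [dif_pos h]
    exact continuous_apply (⟨q, h⟩ : {e : Fin n × Fin n // e ∈ E})
  · simp only [dif_neg h]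
    exact continuous_const

lemma sol_and_induces_iff {r : {e : Fin n × Fin n // e ∈ E} → ℝ} {lam : ℝ} {u : Fin n → ℝ}
    {σ : {i : Fin n // i ∈ VMax} → Fin n} {τ : {i : Fin n // i ∉ VMax} → Fin n}
    (hσ : IsMaxPolicy E VMax σ) (hτ : IsMinPolicy E VMax τ) :
    (IsErgodicSol E VMax r lam u ∧ Induces E VMax r u σ τ) ↔
    ∀ i : Fin n, (∀ j : Fin n, (i, j) ∈ E →
        (if i ∈ VMax then wt E r (i, j) + u j ≤ lam + u i
         else lam + u i ≤ wt E r (i, j) + u j)) ∧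
      lam + u i = wt E r (i, combine VMax σ τ i) + u (combine VMax σ τ i) := by
  constructor
  · rintro ⟨hsol, -, -, hmax, hmin⟩ i
    constructor
    · intro j hj
      by_cases hi : i ∈ VMax
      · rw [if_pos hi]
        exact ((hsol i).1 hi).2 ⟨j, hj, rfl⟩
      · rw [if_neg hi]
        exact ((hsol i).2 hi).2 ⟨j, hj, rfl⟩
    · by_cases hi : i ∈ VMax
      · have h1 := (hsol i).1 hi
        have h2 := hmax ⟨i, hi⟩
        have h3 : combine VMax σ τ i = σ ⟨i, hi⟩ := dif_pos hi
        rw [h3]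
        exact h1.unique h2
      · have h1 := (hsol i).2 hi
        have h2 := hmin ⟨i, hi⟩
        have h3 : combine VMax σ τ i = τ ⟨i, hi⟩ := dif_neg hi
        rw [h3]
        exact h1.unique h2
  · intro h
    have hcomb : ∀ i : Fin n, (i, combine VMax σ τ i) ∈ E := by
      intro i
      unfold combine
      by_cases hi : i ∈ VMax
      · rw [dif_pos hi]; exact hσ ⟨i, hi⟩
      · rw [dif_neg hi]; exact hτ ⟨i, hi⟩
    have hsol : IsErgodicSol E VMax r lam u := by
      intro i
      constructor
      · intro hi
        constructor
        · exact ⟨combine VMax σ τ i, hcomb i, (h i).2⟩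
        · rintro x ⟨j, hj, rfl⟩
          have := (h i).1 j hj
          rwa [if_pos hi] at this
      · intro hi
        constructor
        · exact ⟨combine VMax σ τ i, hcomb i, (h i).2⟩
        · rintro x ⟨j, hj, rfl⟩
          have := (h i).1 j hj
          rwa [if_neg hi] at this
    refine ⟨hsol, hσ, hτ, ?_, ?_⟩
    · intro i
      have h3 : combine VMax σ τ i.1 = σ i := by
        unfold combine
        rw [dif_pos i.2]
      constructor
      · exact ⟨σ i, hσ i, rfl⟩
      · rintro x ⟨j, hj, rfl⟩
        have h1 := (h i.1).1 j hj
        rw [if_pos i.2] at h1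
        have h2 := (h i.1).2
        rw [h3] at h2
        linarith
    · intro i
      have h3 : combine VMax σ τ i.1 = τ i := by
        unfold combine
        rw [dif_neg i.2]
      constructor
      · exact ⟨τ i, hτ i, rfl⟩
      · rintro x ⟨j, hj, rfl⟩
        have h1 := (h i.1).1 j hj
        rw [if_neg i.2] at h1
        have h2 := (h i.1).2
        rw [h3] at h2
        linarith

lemma isClosed_solSet (σ : {i : Fin n // i ∈ VMax} → Fin n) (τ : {i : Fin n // i ∉ VMax} → Fin n)
    (hσ : IsMaxPolicy E VMax σ) (hτ : IsMinPolicy E VMax τ) :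
    IsClosed {p : ({e : Fin n × Fin n // e ∈ E} → ℝ) × ℝ × (Fin n → ℝ) |
      IsErgodicSol E VMax p.1 p.2.1 p.2.2 ∧ Induces E VMax p.1 p.2.2 σ τ} := by
  have hrepr : {p : ({e : Fin n × Fin n // e ∈ E} → ℝ) × ℝ × (Fin n → ℝ) |
      IsErgodicSol E VMax p.1 p.2.1 p.2.2 ∧ Induces E VMax p.1 p.2.2 σ τ} =
      ⋂ i : Fin n,
        ((⋂ j : Fin n, ⋂ (_ : (i, j) ∈ E),
          {p : ({e : Fin n × Fin n // e ∈ E} → ℝ) × ℝ × (Fin n → ℝ) |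
            if i ∈ VMax then wt E p.1 (i, j) + p.2.2 j ≤ p.2.1 + p.2.2 i
            else p.2.1 + p.2.2 i ≤ wt E p.1 (i, j) + p.2.2 j}) ∩
        {p : ({e : Fin n × Fin n // e ∈ E} → ℝ) × ℝ × (Fin n → ℝ) |
          p.2.1 + p.2.2 i = wt E p.1 (i, combine VMax σ τ i) + p.2.2 (combine VMax σ τ i)}) := by
    ext p
    simp only [mem_setOf_eq, mem_iInter, mem_inter_iff]
    rw [sol_and_induces_iff hσ hτ]
  rw [hrepr]
  have hcont1 : ∀ i : Fin n, Continuous fun p :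
      ({e : Fin n × Fin n // e ∈ E} → ℝ) × ℝ × (Fin n → ℝ) => p.2.1 + p.2.2 i :=
    fun i => (continuous_fst.comp continuous_snd).add
      ((continuous_apply i).comp (continuous_snd.comp continuous_snd))
  have hcont2 : ∀ q : Fin n × Fin n, Continuous fun p :
      ({e : Fin n × Fin n // e ∈ E} → ℝ) × ℝ × (Fin n → ℝ) => wt E p.1 q + p.2.2 q.2 :=
    fun q => ((continuous_wt q).comp continuous_fst).add
      ((continuous_apply q.2).comp (continuous_snd.comp continuous_snd))
  refine isClosed_iInter fun i => IsClosed.inter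
    (isClosed_iInter fun j => isClosed_iInter fun _ => ?_)
    (isClosed_eq (hcont1 i) (hcont2 (i, combine VMax σ τ i)))
  by_cases hi : i ∈ VMax
  · simp only [if_pos hi]
    exact isClosed_le (hcont2 (i, j)) (hcont1 i)
  · simp only [if_neg hi]
    exact isClosed_le (hcont1 i) (hcont2 (i, j))

lemma isClosed_bias [Nonempty (Fin n)] (σ : {i : Fin n // i ∈ VMax} → Fin n)
    (τ : {i : Fin n // i ∉ VMax} → Fin n) :
    IsClosed {r : {e : Fin n × Fin n // e ∈ E} → ℝ | BiasInduced E VMax r σ τ} := by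
  by_cases hσ : IsMaxPolicy E VMax σ
  swap
  · have : {r : {e : Fin n × Fin n // e ∈ E} → ℝ | BiasInduced E VMax r σ τ} = ∅ := by
      ext r
      simp only [mem_setOf_eq, mem_empty_iff_false, iff_false]
      rintro ⟨lam, u, -, hσ', -⟩
      exact hσ hσ'
    rw [this]; exact isClosed_empty
  by_cases hτ : IsMinPolicy E VMax τ
  swap
  · have : {r : {e : Fin n × Fin n // e ∈ E} → ℝ | BiasInduced E VMax r σ τ} = ∅ := by
      ext r
      simp only [mem_setOf_eq, mem_empty_iff_false, iff_false]
      rintro ⟨lam, u, -, -, hτ', -⟩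
      exact hτ hτ'
    rw [this]; exact isClosed_empty
  have hGcont : Continuous fun r : {e : Fin n × Fin n // e ∈ E} → ℝ => Mr E r :=
    continuous_finset_sum _ fun e _ => (continuous_apply e).abs
  have hSeq : {r : {e : Fin n × Fin n // e ∈ E} → ℝ | BiasInduced E VMax r σ τ} =
      {r | ∃ q : ℝ × (Fin n → ℝ),
        (IsErgodicSol E VMax r q.1 q.2 ∧ Induces E VMax r q.2 σ τ) ∧
        |q.1| ≤ Mr E r ∧ ∀ i, |q.2 i| ≤ n * (2 * Mr E r + 1)} := by
    ext r
    constructor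
    · rintro ⟨lam, u, hsol, hind⟩
      have hlam := abs_lam_le hsol
      obtain ⟨u', h1, h2, h3⟩ := compress hsol hind hlam
      exact ⟨(lam, u'), ⟨h1, h2⟩, hlam, h3⟩
    · rintro ⟨⟨lam, u⟩, ⟨h1, h2⟩, -, -⟩
      exact ⟨lam, u, h1, h2⟩
  rw [hSeq]
  apply IsSeqClosed.isClosed
  intro x r hx hlim
  have hMr : Tendsto (fun k => Mr E (x k)) atTop (𝓝 (Mr E r)) :=
    (hGcont.tendsto r).comp hlim
  obtain ⟨C, hC⟩ := hMr.bddAbove_range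
  have hC' : ∀ k, Mr E (x k) ≤ C := fun k => hC (mem_range_self k)
  have hC0 : 0 ≤ C := le_trans (Mr_nonneg (x 0)) (hC' 0)
  set C2 : ℝ := (n : ℝ) * (2 * C + 1) with hC2
  choose q hq using hx
  have hqK : ∀ k, q k ∈ Icc (-C) C ×ˢ Set.univ.pi fun _ : Fin n => Icc (-C2) C2 := by
    intro k
    constructor
    · exact mem_Icc.mpr (abs_le.mp (le_trans (hq k).2.1 (hC' k)))
    · intro i _
      refine mem_Icc.mpr (abs_le.mp (le_trans ((hq k).2.2 i) ?_))
      rw [hC2]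
      have : (2 : ℝ) * Mr E (x k) + 1 ≤ 2 * C + 1 := by linarith [hC' k]
      exact mul_le_mul_of_nonneg_left this (Nat.cast_nonneg n)
  have hKcomp : IsCompact (Icc (-C) C ×ˢ Set.univ.pi fun _ : Fin n => Icc (-C2) C2) :=
    isCompact_Icc.prod (isCompact_univ_pi fun _ => isCompact_Icc)
  obtain ⟨qlim, hqlimK, ψ, hψ, hqlim⟩ := hKcomp.tendsto_subseq hqK
  have hxψ : Tendsto (fun k => x (ψ k)) atTop (𝓝 r) := hlim.comp hψ.tendsto_atTop
  have hpair : Tendsto (fun k => (x (ψ k), q (ψ k))) atTop (𝓝 (r, qlim)) :=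
    hxψ.prodMk_nhds hqlim
  have hmem : (r, qlim) ∈ {p : ({e : Fin n × Fin n // e ∈ E} → ℝ) × ℝ × (Fin n → ℝ) |
      IsErgodicSol E VMax p.1 p.2.1 p.2.2 ∧ Induces E VMax p.1 p.2.2 σ τ} :=
    (isClosed_solSet σ τ hσ hτ).mem_of_tendsto hpair
      (Filter.Eventually.of_forall fun k => (hq (ψ k)).1)
  have hMrψ : Tendsto (fun k => Mr E (x (ψ k))) atTop (𝓝 (Mr E r)) :=
    hMr.comp hψ.tendsto_atTop
  have hb1 : |qlim.1| ≤ Mr E r := by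
    have t1 : Tendsto (fun k => |(q (ψ k)).1|) atTop (𝓝 |qlim.1|) :=
      ((continuous_abs.comp continuous_fst).tendsto qlim).comp hqlim
    exact le_of_tendsto_of_tendsto' t1 hMrψ fun k => (hq (ψ k)).2.1
  have hb2 : ∀ i, |qlim.2 i| ≤ (n : ℝ) * (2 * Mr E r + 1) := by
    intro i
    have t1 : Tendsto (fun k => |(q (ψ k)).2 i|) atTop (𝓝 |qlim.2 i|) :=
      ((continuous_abs.comp ((continuous_apply i).comp continuous_snd)).tendsto qlim).comp hqlim
    have t2 : Tendsto (fun k => (n : ℝ) * (2 * Mr E (x (ψ k)) + 1)) atTop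
        (𝓝 ((n : ℝ) * (2 * Mr E r + 1))) := by
      exact (hMrψ.const_mul 2 |>.add_const 1).const_mul (n : ℝ)
    exact le_of_tendsto_of_tendsto' t1 t2 fun k => (hq (ψ k)).2.2 i
  exact ⟨qlim, hmem, hb1, hb2⟩

end Stmt13Aux

namespace Stmt13Aux

open Set Filter Topology MeasureTheory
open scoped ENNReal NNReal

variable {n : ℕ} {E : Finset (Fin n × Fin n)} {VMax : Finset (Fin n)}

/-- Projection of the intersection of a closed and an open subset of a product of proper
metric spaces is measurable (it is σ-compact). -/
lemma measurableSet_fst_image {X Y : Type*} [MetricSpace X] [MetricSpace Y]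
    [ProperSpace X] [ProperSpace Y] [MeasurableSpace X] [BorelSpace X]
    {F O : Set (X × Y)} (hF : IsClosed F) (hO : IsOpen O) :
    MeasurableSet (Prod.fst '' (F ∩ O)) := by
  rcases isEmpty_or_nonempty (X × Y) with h | h
  · have : F ∩ O = ∅ := Set.eq_empty_of_isEmpty _
    simp [this]
  · obtain ⟨z⟩ := h
    obtain ⟨G, hGclosed, -, hGU, -⟩ := hO.exists_iUnion_isClosed
    have hcov : F ∩ O = ⋃ k : ℕ, ⋃ m : ℕ, (F ∩ Metric.closedBall z m) ∩ G k := by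
      ext p
      simp only [mem_inter_iff, mem_iUnion]
      constructor
      · rintro ⟨hf, ho⟩
        rw [← hGU] at ho
        obtain ⟨k, hk⟩ := mem_iUnion.mp ho
        exact ⟨k, ⌈dist p z⌉₊, ⟨⟨hf, Metric.mem_closedBall.mpr (Nat.le_ceil _)⟩, hk⟩⟩
      · rintro ⟨k, m, ⟨⟨hf, -⟩, hk⟩⟩
        exact ⟨hf, by rw [← hGU]; exact mem_iUnion.mpr ⟨k, hk⟩⟩
    rw [hcov, image_iUnion]
    refine MeasurableSet.iUnion fun k => ?_
    rw [image_iUnion]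
    refine MeasurableSet.iUnion fun m => ?_
    have hcomp : IsCompact ((F ∩ Metric.closedBall z m) ∩ G k) :=
      (((isCompact_closedBall z m).inter_left hF).inter_right (hGclosed k))
    exact (hcomp.image continuous_fst).isClosed.measurableSet

lemma pcell_eq (σ : {i : Fin n // i ∈ VMax} → Fin n) (τ : {i : Fin n // i ∉ VMax} → Fin n) :
    Pcell E VMax σ τ = {r | BiasInduced E VMax r σ τ} \
      ⋃ σ' : {i : Fin n // i ∈ VMax} → Fin n, ⋃ τ' : {i : Fin n // i ∉ VMax} → Fin n,
        ⋃ (_ : ¬(σ' = σ ∧ τ' = τ)), {r | BiasInduced E VMax r σ' τ'} := by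
  ext r
  simp only [Pcell, mem_setOf_eq, mem_diff, mem_iUnion, not_exists]
  constructor
  · rintro ⟨h1, h2⟩
    refine ⟨h1, fun σ' τ' hne hB => hne (h2 σ' τ' hB)⟩
  · rintro ⟨h1, h2⟩
    refine ⟨h1, fun σ' τ' hB => ?_⟩
    by_contra hne
    exact h2 σ' τ' hne hB

/-- The key measurability lemma: the set of weight vectors `r` such that for some
`x ∈ O`, the update of `r` at `e` by `x` lies in some cell `P^{σ,τ}` with `(σ,τ)`
satisfying an arbitrary condition `Q`, is measurable. -/
lemma measurableSet_slice [Nonempty (Fin n)] (e : {e : Fin n × Fin n // e ∈ E})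
    {O : Set ℝ} (hO : IsOpen O)
    (Q : ({i : Fin n // i ∈ VMax} → Fin n) → ({i : Fin n // i ∉ VMax} → Fin n) → Prop) :
    MeasurableSet {r : {e : Fin n × Fin n // e ∈ E} → ℝ |
      ∃ x' ∈ O, ∃ σ τ, Q σ τ ∧ Function.update r e x' ∈ Pcell E VMax σ τ} := by
  classical
  set Φ : (({e : Fin n × Fin n // e ∈ E} → ℝ) × ℝ) → ({e : Fin n × Fin n // e ∈ E} → ℝ) :=
    fun p => Function.update p.1 e p.2 with hΦ
  have hΦcont : Continuous Φ := continuous_update e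
  have hrepr : {r : {e : Fin n × Fin n // e ∈ E} → ℝ |
      ∃ x' ∈ O, ∃ σ τ, Q σ τ ∧ Function.update r e x' ∈ Pcell E VMax σ τ} =
      ⋃ σ : {i : Fin n // i ∈ VMax} → Fin n, ⋃ τ : {i : Fin n // i ∉ VMax} → Fin n,
        ⋃ (_ : Q σ τ), Prod.fst ''
          ((Φ ⁻¹' {r | BiasInduced E VMax r σ τ}) ∩
           ((Φ ⁻¹' (⋃ σ' : {i : Fin n // i ∈ VMax} → Fin n,
              ⋃ τ' : {i : Fin n // i ∉ VMax} → Fin n,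
              ⋃ (_ : ¬(σ' = σ ∧ τ' = τ)), {r | BiasInduced E VMax r σ' τ'}))ᶜ ∩
            (univ ×ˢ O))) := by
    ext r
    simp only [mem_setOf_eq, mem_iUnion, mem_image, mem_inter_iff, mem_preimage, mem_compl_iff,
      mem_prod, mem_univ, true_and, Prod.exists]
    constructor
    · rintro ⟨x', hx', σ, τ, hQ, hP⟩
      rw [pcell_eq] at hP
      exact ⟨σ, τ, hQ, r, x', ⟨⟨hP.1, by simpa [hΦ, mem_iUnion] using hP.2, hx'⟩, rfl⟩⟩
    · rintro ⟨σ, τ, hQ, r', x', ⟨⟨h1, h2, hx'⟩, rfl⟩⟩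
      refine ⟨x', hx', σ, τ, hQ, ?_⟩
      rw [pcell_eq]
      exact ⟨h1, by simpa [hΦ, mem_iUnion] using h2⟩
  rw [hrepr]
  refine MeasurableSet.iUnion fun σ => MeasurableSet.iUnion fun τ =>
    MeasurableSet.iUnion fun _ => ?_
  have hFclosed : IsClosed (Φ ⁻¹' {r | BiasInduced E VMax r σ τ}) :=
    (isClosed_bias σ τ).preimage hΦcont
  have hUclosed : IsClosed (⋃ σ' : {i : Fin n // i ∈ VMax} → Fin n,
      ⋃ τ' : {i : Fin n // i ∉ VMax} → Fin n,
      ⋃ (_ : ¬(σ' = σ ∧ τ' = τ)), {r : {e : Fin n × Fin n // e ∈ E} → ℝ |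
        BiasInduced E VMax r σ' τ'}) := by
    refine isClosed_iUnion_of_finite fun σ' => isClosed_iUnion_of_finite fun τ' => ?_
    rw [Set.iUnion_eq_if]
    split_ifs
    all_goals first
    | exact isClosed_bias (E := E) σ' τ'
    | exact isClosed_empty
  have hOopen : IsOpen ((Φ ⁻¹' (⋃ σ' : {i : Fin n // i ∈ VMax} → Fin n,
      ⋃ τ' : {i : Fin n // i ∉ VMax} → Fin n,
      ⋃ (_ : ¬(σ' = σ ∧ τ' = τ)), {r : {e : Fin n × Fin n // e ∈ E} → ℝ |
        BiasInduced E VMax r σ' τ'}))ᶜ ∩ (univ ×ˢ O)) :=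
    ((hUclosed.preimage hΦcont).isOpen_compl).inter (isOpen_univ.prod hO)
  exact measurableSet_fst_image hFclosed hOopen

end Stmt13Aux

namespace Stmt13Aux

open Set Filter Topology MeasureTheory
open scoped ENNReal NNReal

variable {n : ℕ} {E : Finset (Fin n × Fin n)} {VMax : Finset (Fin n)}

lemma Zedge_update (e : {e : Fin n × Fin n // e ∈ E}) (r : {e : Fin n × Fin n // e ∈ E} → ℝ)
    (t : ℝ) : Zedge E VMax e (Function.update r e t) = Zedge E VMax e r := by
  unfold Zedge
  simp_rw [Function.update_idem]

lemma measurable_Zedge (e : {e : Fin n × Fin n // e ∈ E}) :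
    Measurable (Zedge E VMax e) := by
  have hne : Nonempty (Fin n) := ⟨e.1.1⟩
  by_cases h : e.1.1 ∈ VMax
  · have heq : Zedge E VMax e = fun r => sSup {x : EReal | ∃ x' : ℝ, x = (x' : EReal) ∧
        ∃ (σ : {i : Fin n // i ∈ VMax} → Fin n) (τ : {i : Fin n // i ∉ VMax} → Fin n),
          InXi E VMax σ τ ∧ Function.update r e x' ∈ Pcell E VMax σ τ ∧
          σ ⟨e.1.1, h⟩ ≠ e.1.2} := funext fun r => dif_pos h
    rw [heq]
    apply measurable_of_Ioi
    intro c
    have hset : (fun r : {e : Fin n × Fin n // e ∈ E} → ℝ => sSup {x : EReal | ∃ x' : ℝ,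
        x = (x' : EReal) ∧ ∃ (σ : {i : Fin n // i ∈ VMax} → Fin n)
          (τ : {i : Fin n // i ∉ VMax} → Fin n),
          InXi E VMax σ τ ∧ Function.update r e x' ∈ Pcell E VMax σ τ ∧
          σ ⟨e.1.1, h⟩ ≠ e.1.2}) ⁻¹' (Ioi c) =
        {r : {e : Fin n × Fin n // e ∈ E} → ℝ | ∃ x' ∈ {y : ℝ | c < (y : EReal)},
          ∃ σ τ, (InXi E VMax σ τ ∧ σ ⟨e.1.1, h⟩ ≠ e.1.2) ∧
            Function.update r e x' ∈ Pcell E VMax σ τ} := by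
      ext r
      simp only [mem_preimage, mem_Ioi, mem_setOf_eq]
      rw [lt_sSup_iff]
      constructor
      · rintro ⟨a, ⟨x', rfl, σ, τ, hXi, hP, hne'⟩, hlt⟩
        exact ⟨x', hlt, σ, τ, ⟨hXi, hne'⟩, hP⟩
      · rintro ⟨x', hlt, σ, τ, ⟨hXi, hne'⟩, hP⟩
        exact ⟨(x' : EReal), ⟨x', rfl, σ, τ, hXi, hP, hne'⟩, hlt⟩
    rw [hset]
    exact measurableSet_slice e (isOpen_Ioi.preimage continuous_coe_real_ereal) _
  · have heq : Zedge E VMax e = fun r => sInf {x : EReal | ∃ x' : ℝ, x = (x' : EReal) ∧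
        ∃ (σ : {i : Fin n // i ∈ VMax} → Fin n) (τ : {i : Fin n // i ∉ VMax} → Fin n),
          InXi E VMax σ τ ∧ Function.update r e x' ∈ Pcell E VMax σ τ ∧
          τ ⟨e.1.1, h⟩ ≠ e.1.2} := funext fun r => dif_neg h
    rw [heq]
    apply measurable_of_Iio
    intro c
    have hset : (fun r : {e : Fin n × Fin n // e ∈ E} → ℝ => sInf {x : EReal | ∃ x' : ℝ,
        x = (x' : EReal) ∧ ∃ (σ : {i : Fin n // i ∈ VMax} → Fin n)
          (τ : {i : Fin n // i ∉ VMax} → Fin n),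
          InXi E VMax σ τ ∧ Function.update r e x' ∈ Pcell E VMax σ τ ∧
          τ ⟨e.1.1, h⟩ ≠ e.1.2}) ⁻¹' (Iio c) =
        {r : {e : Fin n × Fin n // e ∈ E} → ℝ | ∃ x' ∈ {y : ℝ | (y : EReal) < c},
          ∃ σ τ, (InXi E VMax σ τ ∧ τ ⟨e.1.1, h⟩ ≠ e.1.2) ∧
            Function.update r e x' ∈ Pcell E VMax σ τ} := by
      ext r
      simp only [mem_preimage, mem_Iio, mem_setOf_eq]
      rw [sInf_lt_iff]
      constructor
      · rintro ⟨a, ⟨x', rfl, σ, τ, hXi, hP, hne'⟩, hlt⟩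
        exact ⟨x', hlt, σ, τ, ⟨hXi, hne'⟩, hP⟩
      · rintro ⟨x', hlt, σ, τ, ⟨hXi, hne'⟩, hP⟩
        exact ⟨(x' : EReal), ⟨x', rfl, σ, τ, hXi, hP, hne'⟩, hlt⟩
    rw [hset]
    exact measurableSet_slice e (isOpen_Iio.preimage continuous_coe_real_ereal) _

end Stmt13Aux

namespace Stmt13Aux

open Set Filter Topology MeasureTheory ProbabilityTheory
open scoped ENNReal NNReal

variable {n : ℕ} {E : Finset (Fin n × Fin n)} {VMax : Finset (Fin n)}

lemma edge_bound {Ω : Type*} [MeasurableSpace Ω] (μ : Measure Ω) [IsProbabilityMeasure μ]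
    (X : Ω → {e : Fin n × Fin n // e ∈ E} → ℝ)
    (hmeas : ∀ e, Measurable fun ω => X ω e)
    (hindep : iIndepFun (fun e ω => X ω e) μ)
    (f : {e : Fin n × Fin n // e ∈ E} → ℝ → ENNReal)
    (hdens : ∀ e, Measure.map (fun ω => X ω e) μ = volume.withDensity (f e))
    {φ : ℝ} (hφ : 0 < φ) (hbound : ∀ e y, f e y ≤ ENNReal.ofReal φ)
    {α : ℝ} (e : {e : Fin n × Fin n // e ∈ E}) :
    μ {ω | ∃ z : ℝ, Zedge E VMax e (X ω) = (z : EReal) ∧ |X ω e - z| ≤ α} ≤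
      ENNReal.ofReal (2 * α * φ) := by
  classical
  set Y : Ω → ({e : Fin n × Fin n // e ∈ E} → ℝ) :=
    fun ω => Function.update (X ω) e 0 with hY
  have hYmeas : Measurable Y := by
    apply measurable_pi_lambda
    intro e'
    by_cases he' : e' = e
    · subst he'
      have : (fun ω => Y ω e') = fun _ => (0 : ℝ) :=
        funext fun ω => Function.update_self _ _ _
      rw [this]; exact measurable_const
    · have : (fun ω => Y ω e') = fun ω => X ω e' :=
        funext fun ω => Function.update_of_ne he' _ _
      rw [this]; exact hmeas e'
  have hXe : Measurable fun ω => X ω e := hmeas e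
  set C₀ : Set (({e : Fin n × Fin n // e ∈ E} → ℝ) × ℝ) :=
    {p | Zedge E VMax e p.1 ≠ ⊥ ∧ Zedge E VMax e p.1 ≠ ⊤ ∧
      |p.2 - (Zedge E VMax e p.1).toReal| ≤ α} with hC₀def
  have hg : Measurable fun p : ({e : Fin n × Fin n // e ∈ E} → ℝ) × ℝ => Zedge E VMax e p.1 :=
    (measurable_Zedge e).comp measurable_fst
  have hC₀ : MeasurableSet C₀ := by
    have h1 : MeasurableSet {p : ({e : Fin n × Fin n // e ∈ E} → ℝ) × ℝ |
        Zedge E VMax e p.1 ≠ ⊥} := (hg (measurableSet_singleton ⊥)).compl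
    have h2 : MeasurableSet {p : ({e : Fin n × Fin n // e ∈ E} → ℝ) × ℝ |
        Zedge E VMax e p.1 ≠ ⊤} := (hg (measurableSet_singleton ⊤)).compl
    have hm : Measurable fun p : ({e : Fin n × Fin n // e ∈ E} → ℝ) × ℝ =>
        |p.2 - (Zedge E VMax e p.1).toReal| := (measurable_snd.sub hg.ereal_toReal).abs
    have h3 : MeasurableSet {p : ({e : Fin n × Fin n // e ∈ E} → ℝ) × ℝ |
        |p.2 - (Zedge E VMax e p.1).toReal| ≤ α} := hm measurableSet_Iic
    exact h1.inter (h2.inter h3)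
  have hpairpre : {ω | ∃ z : ℝ, Zedge E VMax e (X ω) = (z : EReal) ∧ |X ω e - z| ≤ α} =
      (fun ω => (Y ω, X ω e)) ⁻¹' C₀ := by
    ext ω
    have hZY : Zedge E VMax e (Y ω) = Zedge E VMax e (X ω) := Zedge_update e (X ω) 0
    simp only [mem_setOf_eq, mem_preimage, hC₀def]
    constructor
    · rintro ⟨z, hz, hle⟩
      rw [hZY, hz]
      exact ⟨EReal.coe_ne_bot z, EReal.coe_ne_top z, by rwa [EReal.toReal_coe]⟩
    · rintro ⟨hb, ht, hle⟩
      rw [hZY] at hb ht hle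
      exact ⟨(Zedge E VMax e (X ω)).toReal, (EReal.coe_toReal ht hb).symm, hle⟩
  have hIF : IndepFun Y (fun ω => X ω e) μ := by
    have hdisj : Disjoint (Finset.univ.erase e) ({e} : Finset {e : Fin n × Fin n // e ∈ E}) := by
      simp [Finset.disjoint_singleton_right]
    have h0 := hindep.indepFun_finset (Finset.univ.erase e) {e} hdisj hmeas
    set g : ({x : {e : Fin n × Fin n // e ∈ E} // x ∈ Finset.univ.erase e} → ℝ) →
        ({e : Fin n × Fin n // e ∈ E} → ℝ) :=
      fun v e' => if h : e' ∈ Finset.univ.erase e then v ⟨e', h⟩ else 0 with hgdef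
    have hgm : Measurable g := by
      apply measurable_pi_lambda
      intro e'
      by_cases h : e' ∈ Finset.univ.erase e
      · have : (fun v : {x : {e : Fin n × Fin n // e ∈ E} // x ∈ Finset.univ.erase e} → ℝ =>
            g v e') = fun v => v ⟨e', h⟩ := by
          funext v; simp only [hgdef, dif_pos h]
        rw [this]; exact measurable_pi_apply _
      · have : (fun v : {x : {e : Fin n × Fin n // e ∈ E} // x ∈ Finset.univ.erase e} → ℝ =>
            g v e') = fun _ => (0 : ℝ) := by
          funext v; simp only [hgdef, dif_neg h]
        rw [this]; exact measurable_const
    set h2 : ({x : {e : Fin n × Fin n // e ∈ E} // x ∈ ({e} : Finset _)} → ℝ) → ℝ :=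
      fun v => v ⟨e, Finset.mem_singleton_self e⟩ with hh2def
    have hh2m : Measurable h2 := measurable_pi_apply _
    have hcomp := h0.comp hgm hh2m
    have e1 : (g ∘ fun a (i : {x : {e : Fin n × Fin n // e ∈ E} // x ∈ Finset.univ.erase e}) =>
        X a i) = Y := by
      funext a
      funext e'
      simp only [Function.comp_apply, hgdef, hY]
      by_cases h : e' ∈ Finset.univ.erase e
      · rw [dif_pos h, Function.update_of_ne (Finset.ne_of_mem_erase h)]
      · rw [dif_neg h]
        have he' : e' = e := by
          by_contra hne
          exact h (Finset.mem_erase.mpr ⟨hne, Finset.mem_univ _⟩)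
        rw [he', Function.update_self]
    have e2 : (h2 ∘ fun a (i : {x : {e : Fin n × Fin n // e ∈ E} // x ∈ ({e} : Finset _)}) =>
        X a i) = fun ω => X ω e := rfl
    rw [← e1, ← e2]
    exact hcomp
  have hprob1 : IsProbabilityMeasure (μ.map fun ω => X ω e) :=
    Measure.isProbabilityMeasure_map hXe.aemeasurable
  have hprob2 : IsProbabilityMeasure (μ.map Y) :=
    Measure.isProbabilityMeasure_map hYmeas.aemeasurable
  have hmapeq : μ.map (fun ω => (Y ω, X ω e)) = (μ.map Y).prod (μ.map fun ω => X ω e) :=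
    (indepFun_iff_map_prod_eq_prod_map_map hYmeas.aemeasurable hXe.aemeasurable).mp hIF
  have hsection : ∀ y : {e : Fin n × Fin n // e ∈ E} → ℝ,
      (μ.map fun ω => X ω e) (Prod.mk y ⁻¹' C₀) ≤ ENNReal.ofReal (2 * α * φ) := by
    intro y
    by_cases hy : Zedge E VMax e y ≠ ⊥ ∧ Zedge E VMax e y ≠ ⊤
    · have hsec : Prod.mk y ⁻¹' C₀ =
          Icc ((Zedge E VMax e y).toReal - α) ((Zedge E VMax e y).toReal + α) := by
        ext x
        simp only [mem_preimage, hC₀def, mem_setOf_eq, mem_Icc]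
        constructor
        · rintro ⟨-, -, h3⟩
          have := abs_le.mp h3
          exact ⟨by linarith [this.1], by linarith [this.2]⟩
        · rintro ⟨h1', h2'⟩
          exact ⟨hy.1, hy.2, abs_le.mpr ⟨by linarith, by linarith⟩⟩
      rw [hsec, hdens e, withDensity_apply _ measurableSet_Icc]
      calc ∫⁻ x in Icc ((Zedge E VMax e y).toReal - α) ((Zedge E VMax e y).toReal + α), f e x
          ≤ ∫⁻ _ in Icc ((Zedge E VMax e y).toReal - α) ((Zedge E VMax e y).toReal + α),
            ENNReal.ofReal φ := lintegral_mono fun x => hbound e x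
      _ = ENNReal.ofReal φ *
            volume (Icc ((Zedge E VMax e y).toReal - α) ((Zedge E VMax e y).toReal + α)) :=
          setLIntegral_const _ _
      _ = ENNReal.ofReal φ * ENNReal.ofReal (2 * α) := by
          rw [Real.volume_Icc]
          congr 1
          ring
      _ = ENNReal.ofReal (2 * α * φ) := by
          rw [← ENNReal.ofReal_mul hφ.le]
          congr 1
          ring
    · have hsec : Prod.mk y ⁻¹' C₀ = ∅ := by
        ext x
        simp only [mem_preimage, hC₀def, mem_setOf_eq, mem_empty_iff_false, iff_false]
        rintro ⟨h1', h2', -⟩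
        exact hy ⟨h1', h2'⟩
      rw [hsec]
      simp
  calc μ {ω | ∃ z : ℝ, Zedge E VMax e (X ω) = (z : EReal) ∧ |X ω e - z| ≤ α}
      = μ.map (fun ω => (Y ω, X ω e)) C₀ := by
        rw [hpairpre, Measure.map_apply (hYmeas.prodMk hXe) hC₀]
  _ = ((μ.map Y).prod (μ.map fun ω => X ω e)) C₀ := by rw [hmapeq]
  _ = ∫⁻ y, (μ.map fun ω => X ω e) (Prod.mk y ⁻¹' C₀) ∂(μ.map Y) := Measure.prod_apply hC₀
  _ ≤ ∫⁻ _, ENNReal.ofReal (2 * α * φ) ∂(μ.map Y) := lintegral_mono hsection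
  _ = ENNReal.ofReal (2 * α * φ) := by simp [lintegral_const, measure_univ]

end Stmt13Aux

open ProbabilityTheory in
/-- In the random model over an ergodic graph, for every `α > 0`, the
probability that some finite threshold `Z_e(r)` is within distance `α` of the weight `r_e`
is at most `2·α·m·φ`. -/
theorem stmt13 (n : ℕ) (E : Finset (Fin n × Fin n)) (VMax : Finset (Fin n))
    (hout : ∀ i : Fin n, ∃ j : Fin n, (i, j) ∈ E)
    (herg : IsErgodicGraph E VMax)
    (φ : ℝ) (hφ : 0 < φ)
    (Ω : Type*) [MeasurableSpace Ω] (μ : Measure Ω) [IsProbabilityMeasure μ]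
    (X : Ω → {e : Fin n × Fin n // e ∈ E} → ℝ)
    (hmeas : ∀ e, Measurable fun ω => X ω e)
    (hindep : iIndepFun (fun e ω => X ω e) μ)
    (f : {e : Fin n × Fin n // e ∈ E} → ℝ → ENNReal)
    (hdens : ∀ e, Measure.map (fun ω => X ω e) μ = volume.withDensity (f e))
    (hbound : ∀ e y, f e y ≤ ENNReal.ofReal φ)
    (α : ℝ) (hα : 0 < α) :
    μ {ω | ∃ (e : {e : Fin n × Fin n // e ∈ E}) (z : ℝ),
        Zedge E VMax e (X ω) = (z : EReal) ∧ |X ω e - z| ≤ α} ≤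
      ENNReal.ofReal (2 * α * E.card * φ) := by
  classical
  have hcover : {ω | ∃ (e : {e : Fin n × Fin n // e ∈ E}) (z : ℝ),
      Zedge E VMax e (X ω) = (z : EReal) ∧ |X ω e - z| ≤ α} =
      ⋃ e : {e : Fin n × Fin n // e ∈ E},
        {ω | ∃ z : ℝ, Zedge E VMax e (X ω) = (z : EReal) ∧ |X ω e - z| ≤ α} := by
    ext ω
    simp only [Set.mem_setOf_eq, Set.mem_iUnion]
  rw [hcover]
  calc μ (⋃ e : {e : Fin n × Fin n // e ∈ E},
      {ω | ∃ z : ℝ, Zedge E VMax e (X ω) = (z : EReal) ∧ |X ω e - z| ≤ α})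
      ≤ ∑' e : {e : Fin n × Fin n // e ∈ E},
        μ {ω | ∃ z : ℝ, Zedge E VMax e (X ω) = (z : EReal) ∧ |X ω e - z| ≤ α} :=
      measure_iUnion_le _
  _ ≤ ∑' _e : {e : Fin n × Fin n // e ∈ E}, ENNReal.ofReal (2 * α * φ) :=
      ENNReal.tsum_le_tsum fun e =>
        Stmt13Aux.edge_bound μ X hmeas hindep f hdens hφ hbound e
  _ = (E.card : ENNReal) * ENNReal.ofReal (2 * α * φ) := by
      rw [tsum_fintype, Finset.sum_const, Finset.card_univ, Fintype.card_coe, nsmul_eq_mul]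
  _ = ENNReal.ofReal (2 * α * E.card * φ) := by
      rw [← ENNReal.ofReal_natCast E.card, ← ENNReal.ofReal_mul (Nat.cast_nonneg E.card)]
      congr 1
      ring
end

section
/- Suppose the graph G is ergodic and r ∈ P^{σ,τ} for some (σ,τ) ∈ Ξ. Then for every edge (i,j) ∈ E that is not used by (σ,τ) (i.e., j ≠ σ(i) when i ∈ V_Max and j ≠ τ(i) when i ∈ V_Min), one has Z_{ij}(r) = λ^{σ,τ}(r) + (u^{σ,τ}(r))_i − (u^{σ,τ}(r))_j. -/
open MeasureTheory

section AuxLemmas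

variable {n : ℕ} {E : Finset (Fin n × Fin n)} {VMax : Finset (Fin n)}

lemma wt_update (r : {e : Fin n × Fin n // e ∈ E} → ℝ) (e : {e : Fin n × Fin n // e ∈ E})
    (x : ℝ) (p : Fin n × Fin n) :
    wt E (Function.update r e x) p = if p = e.1 then x else wt E r p := by
  unfold wt
  by_cases hp : p ∈ E
  · rw [dif_pos hp, dif_pos hp, Function.update_apply]
    congr 1
    simp [Subtype.ext_iff]
  · rw [dif_neg hp, dif_neg hp, if_neg]
    intro h; exact hp (h ▸ e.2)

lemma zp_telescope {f : Fin n → Fin n} {r : {e : Fin n × Fin n // e ∈ E} → ℝ} {lam : ℝ}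
    {u : Fin n → ℝ} (h : IsZeroPlayerSol E f r lam u) (x : Fin n) (N : ℕ) :
    (N : ℝ) * lam + u x
      = (∑ t ∈ Finset.range N, wt E r (f^[t] x, f^[t + 1] x)) + u (f^[N] x) := by
  induction N with
  | zero => simp
  | succ N ih =>
    rw [Finset.sum_range_succ]
    have h1 := h (f^[N] x)
    have h2 : f^[N + 1] x = f (f^[N] x) := Function.iterate_succ_apply' f N x
    rw [h2]
    push_cast
    linarith

lemma exists_iterate_periodic (f : Fin n → Fin n) (x : Fin n) :
    ∃ k : ℕ, IsPeriodicVertex f (f^[k] x) := by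
  obtain ⟨a, b, hab, heq⟩ := Finite.exists_ne_map_eq_of_infinite (fun m : ℕ => f^[m] x)
  rcases lt_or_gt_of_ne hab with hlt | hlt
  · refine ⟨a, b - a, by omega, ?_⟩
    rw [← Function.iterate_add_apply, show b - a + a = b by omega]
    exact heq.symm
  · refine ⟨b, a - b, by omega, ?_⟩
    rw [← Function.iterate_add_apply, show a - b + b = a by omega]
    exact heq

lemma zp_compare {f : Fin n → Fin n} {r : {e : Fin n × Fin n // e ∈ E} → ℝ}
    {lam lam' : ℝ} {u u' : Fin n → ℝ} (hf : HasUniqueCycle f)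
    (h : IsZeroPlayerSol E f r lam u) (h' : IsZeroPlayerSol E f r lam' u') (x0 : Fin n) :
    lam = lam' ∧ ∀ a b : Fin n, u a - u' a = u b - u' b := by
  obtain ⟨k0, k, hk, hkp⟩ := exists_iterate_periodic f x0
  have hlam : lam = lam' := by
    have t1 := zp_telescope h (f^[k0] x0) k
    have t2 := zp_telescope h' (f^[k0] x0) k
    rw [hkp] at t1 t2
    have hkpos : (0 : ℝ) < (k : ℝ) := by exact_mod_cast hk
    have : (k : ℝ) * lam = (k : ℝ) * lam' := by linarith
    exact mul_left_cancel₀ (ne_of_gt hkpos) this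
  have hstep : ∀ z : Fin n, u z - u' z = u (f z) - u' (f z) := by
    intro z
    have e1 := h z
    have e2 := h' z
    rw [hlam] at e1
    linarith
  have hiter : ∀ (m : ℕ) (z : Fin n), u z - u' z = u (f^[m] z) - u' (f^[m] z) := by
    intro m
    induction m with
    | zero => intro z; simp
    | succ m ih =>
      intro z
      rw [Function.iterate_succ_apply]
      rw [hstep z]
      exact ih (f z)
  refine ⟨hlam, fun a b => ?_⟩
  obtain ⟨ka, hpa⟩ := exists_iterate_periodic f a
  obtain ⟨kb, hpb⟩ := exists_iterate_periodic f b
  obtain ⟨t, ht⟩ := hf (f^[ka] a) (f^[kb] b) hpa hpb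
  calc u a - u' a = u (f^[ka] a) - u' (f^[ka] a) := hiter ka a
    _ = u (f^[t] (f^[ka] a)) - u' (f^[t] (f^[ka] a)) := hiter t _
    _ = u (f^[kb] b) - u' (f^[kb] b) := by rw [ht]
    _ = u b - u' b := (hiter kb b).symm

lemma isGreatest_shift {r : {e : Fin n × Fin n // e ∈ E} → ℝ} {u : Fin n → ℝ} {i : Fin n}
    {g : ℝ} (c : ℝ) (h : IsGreatest (outVals E r u i) g) :
    IsGreatest (outVals E r (fun v => u v + c) i) (g + c) := by
  obtain ⟨⟨j, hj, hval⟩, hub⟩ := h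
  refine ⟨⟨j, hj, by rw [hval]; ring⟩, ?_⟩
  rintro v ⟨j', hj', rfl⟩
  have := hub ⟨j', hj', rfl⟩
  show wt E r (i, j') + (u j' + c) ≤ g + c
  linarith

lemma isLeast_shift {r : {e : Fin n × Fin n // e ∈ E} → ℝ} {u : Fin n → ℝ} {i : Fin n}
    {g : ℝ} (c : ℝ) (h : IsLeast (outVals E r u i) g) :
    IsLeast (outVals E r (fun v => u v + c) i) (g + c) := by
  obtain ⟨⟨j, hj, hval⟩, hlb⟩ := h
  refine ⟨⟨j, hj, by rw [hval]; ring⟩, ?_⟩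
  rintro v ⟨j', hj', rfl⟩
  have := hlb ⟨j', hj', rfl⟩
  show g + c ≤ wt E r (i, j') + (u j' + c)
  linarith

lemma ergSol_shift {r : {e : Fin n × Fin n // e ∈ E} → ℝ} {lam : ℝ} {u : Fin n → ℝ}
    (c : ℝ) (h : IsErgodicSol E VMax r lam u) :
    IsErgodicSol E VMax r lam (fun v => u v + c) := by
  intro v
  constructor
  · intro hv
    have h1 : lam + (u v + c) = (lam + u v) + c := by ring
    rw [h1]
    exact isGreatest_shift c ((h v).1 hv)
  · intro hv
    have h1 : lam + (u v + c) = (lam + u v) + c := by ring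
    rw [h1]
    exact isLeast_shift c ((h v).2 hv)

lemma erg_lam_le [Nonempty (Fin n)] {r : {e : Fin n × Fin n // e ∈ E} → ℝ}
    {lam lam' : ℝ} {u u' : Fin n → ℝ}
    (h : IsErgodicSol E VMax r lam u) (h' : IsErgodicSol E VMax r lam' u') :
    lam' ≤ lam := by
  obtain ⟨i0, hi0⟩ := Finite.exists_max (fun v => u' v - u v)
  by_cases hv : i0 ∈ VMax
  · obtain ⟨⟨j, hj, hval⟩, -⟩ := (h' i0).1 hv
    have h1 := ((h i0).1 hv).2 ⟨j, hj, rfl⟩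
    have h2 := hi0 j
    linarith
  · obtain ⟨⟨j, hj, hval⟩, -⟩ := (h i0).2 hv
    have h1 := ((h' i0).2 hv).2 ⟨j, hj, rfl⟩
    have h2 := hi0 j
    linarith

lemma zp_of_induces {σ : {i : Fin n // i ∈ VMax} → Fin n} {τ : {i : Fin n // i ∉ VMax} → Fin n}
    {r : {e : Fin n × Fin n // e ∈ E} → ℝ} {lam : ℝ} {u : Fin n → ℝ}
    (hsol : IsErgodicSol E VMax r lam u) (hind : Induces E VMax r u σ τ) :
    IsZeroPlayerSol E (combine VMax σ τ) r lam u := by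
  intro v
  by_cases hv : v ∈ VMax
  · have := IsGreatest.unique ((hsol v).1 hv) (hind.2.2.1 ⟨v, hv⟩)
    rw [show combine VMax σ τ v = σ ⟨v, hv⟩ from dif_pos hv]
    exact this
  · have := IsLeast.unique ((hsol v).2 hv) (hind.2.2.2 ⟨v, hv⟩)
    rw [show combine VMax σ τ v = τ ⟨v, hv⟩ from dif_neg hv]
    exact this

lemma zp_update_iff {f : Fin n → Fin n} {r : {e : Fin n × Fin n // e ∈ E} → ℝ}
    {lam : ℝ} {u : Fin n → ℝ} (e : {e : Fin n × Fin n // e ∈ E}) (x : ℝ)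
    (hf : f e.1.1 ≠ e.1.2) :
    IsZeroPlayerSol E f (Function.update r e x) lam u ↔ IsZeroPlayerSol E f r lam u := by
  have hne : ∀ v : Fin n, (v, f v) ≠ e.1 := by
    intro v hp
    exact hf (by rw [← congrArg Prod.fst hp]; exact congrArg Prod.snd hp)
  constructor
  · intro h v
    have := h v
    rwa [wt_update, if_neg (hne v)] at this
  · intro h v
    rw [wt_update, if_neg (hne v)]
    exact h v

lemma outVals_update_ne (r : {e : Fin n × Fin n // e ∈ E} → ℝ)
    (e : {e : Fin n × Fin n // e ∈ E}) (x : ℝ) (u : Fin n → ℝ) {v : Fin n}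
    (hv : v ≠ e.1.1) :
    outVals E (Function.update r e x) u v = outVals E r u v := by
  have hne : ∀ j' : Fin n, ((v, j') : Fin n × Fin n) ≠ e.1 :=
    fun j' hp => hv (congrArg Prod.fst hp)
  unfold outVals
  ext val
  constructor
  · rintro ⟨j', hj', rfl⟩
    exact ⟨j', hj', by rw [wt_update, if_neg (hne j')]⟩
  · rintro ⟨j', hj', rfl⟩
    exact ⟨j', hj', by rw [wt_update, if_neg (hne j')]⟩

end AuxLemmas

section CoreLemmas

variable {n : ℕ} {E : Finset (Fin n × Fin n)} {VMax : Finset (Fin n)}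

/-- Core rigidity lemma: if `(lam, u)` is a zero-player solution along `combine σ τ`
(which has a unique cycle) and every edge not chosen by the policies is *strictly*
suboptimal for the bias `u`, then `(σ, τ)` is the unique bias-induced pair, i.e.
`r₀ ∈ P^{σ,τ}`.  Moreover every ergodic solution has value `lam` and bias `u + c`. -/
lemma core_rigid {σ : {i : Fin n // i ∈ VMax} → Fin n} {τ : {i : Fin n // i ∉ VMax} → Fin n}
    {r₀ : {e : Fin n × Fin n // e ∈ E} → ℝ} {lam : ℝ} {u : Fin n → ℝ}
    (hσ : IsMaxPolicy E VMax σ) (hτ : IsMinPolicy E VMax τ)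
    (hf : HasUniqueCycle (combine VMax σ τ))
    (hzp : IsZeroPlayerSol E (combine VMax σ τ) r₀ lam u)
    (hsMax : ∀ v (h : v ∈ VMax), ∀ j', (v, j') ∈ E → j' ≠ σ ⟨v, h⟩ →
      wt E r₀ (v, j') + u j' < lam + u v)
    (hsMin : ∀ v (h : v ∉ VMax), ∀ j', (v, j') ∈ E → j' ≠ τ ⟨v, h⟩ →
      lam + u v < wt E r₀ (v, j') + u j') :
    r₀ ∈ Pcell E VMax σ τ := by
  set f := combine VMax σ τ with hfdef
  have hfmax : ∀ v (h : v ∈ VMax), f v = σ ⟨v, h⟩ := fun v h => dif_pos h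
  have hfmin : ∀ v (h : v ∉ VMax), f v = τ ⟨v, h⟩ := fun v h => dif_neg h
  -- (a) (lam, u) is an ergodic solution
  have hsol : IsErgodicSol E VMax r₀ lam u := by
    intro v
    constructor
    · intro hv
      refine ⟨⟨σ ⟨v, hv⟩, hσ ⟨v, hv⟩, by rw [← hfmax v hv]; exact hzp v⟩, ?_⟩
      rintro val ⟨j', hj', rfl⟩
      by_cases hje : j' = σ ⟨v, hv⟩
      · subst hje
        have := hzp v; rw [hfmax v hv] at this; linarith
      · exact le_of_lt (hsMax v hv j' hj' hje)
    · intro hv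
      refine ⟨⟨τ ⟨v, hv⟩, hτ ⟨v, hv⟩, by rw [← hfmin v hv]; exact hzp v⟩, ?_⟩
      rintro val ⟨j', hj', rfl⟩
      by_cases hje : j' = τ ⟨v, hv⟩
      · subst hje
        have := hzp v; rw [hfmin v hv] at this; linarith
      · exact le_of_lt (hsMin v hv j' hj' hje)
  -- (b) u induces (σ, τ)
  have hkeyMax : ∀ i : {i : Fin n // i ∈ VMax},
      wt E r₀ (i.1, σ i) + u (σ i) = lam + u i.1 := by
    intro i
    have := hzp i.1; rw [hfmax i.1 i.2] at this
    exact this.symm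
  have hkeyMin : ∀ i : {i : Fin n // i ∉ VMax},
      wt E r₀ (i.1, τ i) + u (τ i) = lam + u i.1 := by
    intro i
    have := hzp i.1; rw [hfmin i.1 i.2] at this
    exact this.symm
  have hind : Induces E VMax r₀ u σ τ :=
    ⟨hσ, hτ, fun i => by rw [hkeyMax i]; exact (hsol i.1).1 i.2,
      fun i => by rw [hkeyMin i]; exact (hsol i.1).2 i.2⟩
  refine ⟨⟨lam, u, hsol, hind⟩, ?_⟩
  rintro σ' τ' ⟨lam', u', hsol', hind'⟩
  rcases Nat.eq_zero_or_pos n with hn | hn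
  · subst hn
    exact ⟨funext fun i => i.1.elim0, funext fun i => i.1.elim0⟩
  haveI : Nonempty (Fin n) := Fin.pos_iff_nonempty.mp hn
  -- (c) rigidity: lam' = lam and u' - u is constant
  have hlam : lam' = lam := le_antisymm (erg_lam_le hsol hsol') (erg_lam_le hsol' hsol)
  rw [hlam] at hsol'
  set P : Fin n → ℝ := fun v => u' v - u v with hP
  obtain ⟨imax, himax⟩ := Finite.exists_max P
  obtain ⟨imin, himin⟩ := Finite.exists_min P
  have claimA : ∀ v, P v = P imax → P (f v) = P imax := by
    intro v hPv
    by_cases hv : v ∈ VMax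
    · obtain ⟨⟨jstar, hjs, hval⟩, -⟩ := (hsol' v).1 hv
      have hub := ((hsol v).1 hv).2 ⟨jstar, hjs, rfl⟩
      have hPj := himax jstar
      have hPjeq : P jstar = P imax := by
        simp only [hP] at hPv hPj ⊢
        linarith
      have heq : wt E r₀ (v, jstar) + u jstar = lam + u v := by
        simp only [hP] at hPv hPjeq
        linarith
      have hjsig : jstar = σ ⟨v, hv⟩ := by
        by_contra hne
        exact absurd heq (ne_of_lt (hsMax v hv jstar hjs hne))
      rw [hfmax v hv, ← hjsig]
      exact hPjeq
    · have hlb := ((hsol' v).2 hv).2 ⟨τ ⟨v, hv⟩, hτ ⟨v, hv⟩, rfl⟩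
      have hval := hkeyMin ⟨v, hv⟩
      have hPj := himax (τ ⟨v, hv⟩)
      rw [hfmin v hv]
      simp only [hP] at hPv hPj ⊢
      linarith
  have claimB : ∀ v, P v = P imin → P (f v) = P imin := by
    intro v hPv
    by_cases hv : v ∈ VMax
    · have hub := ((hsol' v).1 hv).2 ⟨σ ⟨v, hv⟩, hσ ⟨v, hv⟩, rfl⟩
      have hval := hkeyMax ⟨v, hv⟩
      have hPj := himin (σ ⟨v, hv⟩)
      rw [hfmax v hv]
      simp only [hP] at hPv hPj ⊢
      linarith
    · obtain ⟨⟨jstar, hjs, hval⟩, -⟩ := (hsol' v).2 hv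
      have hlb := ((hsol v).2 hv).2 ⟨jstar, hjs, rfl⟩
      have hPj := himin jstar
      have hPjeq : P jstar = P imin := by
        simp only [hP] at hPv hPj ⊢
        linarith
      have heq : wt E r₀ (v, jstar) + u jstar = lam + u v := by
        simp only [hP] at hPv hPjeq
        linarith
      have hjsig : jstar = τ ⟨v, hv⟩ := by
        by_contra hne
        exact absurd heq.symm (ne_of_lt (hsMin v hv jstar hjs hne))
      rw [hfmin v hv, ← hjsig]
      exact hPjeq
  have hiterA : ∀ m : ℕ, P (f^[m] imax) = P imax := by
    intro m
    induction m with
    | zero => simp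
    | succ m ih =>
      rw [Function.iterate_succ_apply']
      exact claimA _ ih
  have hiterB : ∀ m : ℕ, P (f^[m] imin) = P imin := by
    intro m
    induction m with
    | zero => simp
    | succ m ih =>
      rw [Function.iterate_succ_apply']
      exact claimB _ ih
  obtain ⟨ka, hpa⟩ := exists_iterate_periodic f imax
  obtain ⟨kb, hpb⟩ := exists_iterate_periodic f imin
  obtain ⟨t, ht⟩ := hf (f^[ka] imax) (f^[kb] imin) hpa hpb
  have hPmaxmin : P imax = P imin := by
    have h1 : P (f^[t] (f^[ka] imax)) = P imax := by
      rw [← Function.iterate_add_apply]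
      have := hiterA (t + ka)
      exact this
    rw [ht] at h1
    rw [← h1, hiterB kb]
  have hconst : ∀ v, P v = P imax := fun v =>
    le_antisymm (himax v) (hPmaxmin ▸ himin v)
  set cst := P imax with hcst
  have hu' : u' = fun v => u v + cst := by
    funext v
    have := hconst v
    simp only [hP] at this
    linarith
  -- (d) conclude σ' = σ and τ' = τ
  rw [hu'] at hind'
  constructor
  · funext i
    have hg' := hind'.2.2.1 i
    have hg := isGreatest_shift cst ((hsol i.1).1 i.2)
    have := IsGreatest.unique hg' hg
    have heq : wt E r₀ (i.1, σ' i) + u (σ' i) = lam + u i.1 := by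
      simp only at this
      linarith
    by_contra hne
    exact absurd heq (ne_of_lt (hsMax i.1 i.2 (σ' i) (hind'.1 i) hne))
  · funext i
    have hg' := hind'.2.2.2 i
    have hg := isLeast_shift cst ((hsol i.1).2 i.2)
    have := IsLeast.unique hg' hg
    have heq : wt E r₀ (i.1, τ' i) + u (τ' i) = lam + u i.1 := by
      simp only at this
      linarith
    by_contra hne
    exact absurd heq.symm (ne_of_lt (hsMin i.1 i.2 (τ' i) (hind'.2.1 i) hne))

end CoreLemmas

section StrictLemma

variable {n : ℕ} {E : Finset (Fin n × Fin n)} {VMax : Finset (Fin n)}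

/-- In a cell `P^{σ,τ}`, every edge not chosen by the policies is strictly suboptimal
for any bias solving the zero-player equation along `combine σ τ`. -/
lemma strict_of_Pcell {σ : {i : Fin n // i ∈ VMax} → Fin n} {τ : {i : Fin n // i ∉ VMax} → Fin n}
    {r : {e : Fin n × Fin n // e ∈ E} → ℝ} {lam : ℝ} {u : Fin n → ℝ}
    (hr : r ∈ Pcell E VMax σ τ)
    (hsol : IsErgodicSol E VMax r lam u)
    (hzp : IsZeroPlayerSol E (combine VMax σ τ) r lam u)
    (hσ : IsMaxPolicy E VMax σ) (hτ : IsMinPolicy E VMax τ) :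
    (∀ v (h : v ∈ VMax), ∀ j', (v, j') ∈ E → j' ≠ σ ⟨v, h⟩ →
      wt E r (v, j') + u j' < lam + u v) ∧
    (∀ v (h : v ∉ VMax), ∀ j', (v, j') ∈ E → j' ≠ τ ⟨v, h⟩ →
      lam + u v < wt E r (v, j') + u j') := by
  have hfmax : ∀ v (h : v ∈ VMax), combine VMax σ τ v = σ ⟨v, h⟩ := fun v h => dif_pos h
  have hfmin : ∀ v (h : v ∉ VMax), combine VMax σ τ v = τ ⟨v, h⟩ := fun v h => dif_neg h
  have hkeyMax : ∀ i : {i : Fin n // i ∈ VMax},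
      wt E r (i.1, σ i) + u (σ i) = lam + u i.1 := by
    intro i
    have := hzp i.1; rw [hfmax i.1 i.2] at this
    exact this.symm
  have hkeyMin : ∀ i : {i : Fin n // i ∉ VMax},
      wt E r (i.1, τ i) + u (τ i) = lam + u i.1 := by
    intro i
    have := hzp i.1; rw [hfmin i.1 i.2] at this
    exact this.symm
  constructor
  · intro v hv j' hj' hne
    have hle := ((hsol v).1 hv).2 ⟨j', hj', rfl⟩
    rcases lt_or_eq_of_le hle with hlt | heq
    · exact hlt
    · exfalso
      set σ₁ := Function.update σ ⟨v, hv⟩ j' with hσ₁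
      have hmax1 : IsMaxPolicy E VMax σ₁ := by
        intro i
        by_cases hi : i = ⟨v, hv⟩
        · subst hi
          rw [hσ₁, Function.update_self]
          exact hj'
        · rw [hσ₁, Function.update_of_ne hi]
          exact hσ i
      have hbi : BiasInduced E VMax r σ₁ τ := by
        refine ⟨lam, u, hsol, hmax1, hτ, ?_, fun i => by rw [hkeyMin i]; exact (hsol i.1).2 i.2⟩
        intro i
        by_cases hi : i = ⟨v, hv⟩
        · subst hi
          rw [hσ₁, Function.update_self, heq]
          exact (hsol v).1 hv
        · rw [hσ₁, Function.update_of_ne hi, hkeyMax i]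
          exact (hsol i.1).1 i.2
      have hσeq := (hr.2 σ₁ τ hbi).1
      have : σ₁ ⟨v, hv⟩ = j' := Function.update_self _ _ _
      rw [hσeq] at this
      exact hne this.symm
  · intro v hv j' hj' hne
    have hle := ((hsol v).2 hv).2 ⟨j', hj', rfl⟩
    rcases lt_or_eq_of_le hle with hlt | heq
    · exact hlt
    · exfalso
      set τ₁ := Function.update τ ⟨v, hv⟩ j' with hτ₁
      have hmin1 : IsMinPolicy E VMax τ₁ := by
        intro i
        by_cases hi : i = ⟨v, hv⟩
        · subst hi
          rw [hτ₁, Function.update_self]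
          exact hj'
        · rw [hτ₁, Function.update_of_ne hi]
          exact hτ i
      have hbi : BiasInduced E VMax r σ τ₁ := by
        refine ⟨lam, u, hsol, hσ, hmin1, fun i => by rw [hkeyMax i]; exact (hsol i.1).1 i.2, ?_⟩
        intro i
        by_cases hi : i = ⟨v, hv⟩
        · subst hi
          rw [hτ₁, Function.update_self, ← heq]
          exact (hsol v).2 hv
        · rw [hτ₁, Function.update_of_ne hi, hkeyMin i]
          exact (hsol i.1).2 i.2
      have hτeq := (hr.2 σ τ₁ hbi).2
      have : τ₁ ⟨v, hv⟩ = j' := Function.update_self _ _ _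
      rw [hτeq] at this
      exact hne this.symm

end StrictLemma


/-- If `r ∈ P^{σ,τ}` with `(σ,τ) ∈ Ξ`, then for every edge `e = (i,j)`
not used by `(σ,τ)` one has `Z_e(r) = λ^{σ,τ}(r) + u^{σ,τ}(r)_i − u^{σ,τ}(r)_j`, where
`(lam, u)` is the normalized solution characterizing `(λ^{σ,τ}(r), u^{σ,τ}(r))`. -/
theorem stmt14 (n : ℕ) (E : Finset (Fin n × Fin n)) (VMax : Finset (Fin n))
    (hout : ∀ i : Fin n, ∃ j : Fin n, (i, j) ∈ E)
    (herg : IsErgodicGraph E VMax)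
    (σ : {i : Fin n // i ∈ VMax} → Fin n) (τ : {i : Fin n // i ∉ VMax} → Fin n)
    (hXi : InXi E VMax σ τ)
    (r : {e : Fin n × Fin n // e ∈ E} → ℝ) (hr : r ∈ Pcell E VMax σ τ)
    (lam : ℝ) (u : Fin n → ℝ)
    (hnorm : IsNormalizedSol E (combine VMax σ τ) r lam u) :
    ∀ e : {e : Fin n × Fin n // e ∈ E},
      (∀ h : e.1.1 ∈ VMax, σ ⟨e.1.1, h⟩ ≠ e.1.2) →
      (∀ h : e.1.1 ∉ VMax, τ ⟨e.1.1, h⟩ ≠ e.1.2) →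
      Zedge E VMax e r = ((lam + u e.1.1 - u e.1.2 : ℝ) : EReal) := by
  intro e hMax hMin
  obtain ⟨lam₀, u₀, hsol₀, hind₀⟩ := hr.1
  have hzp₀ := zp_of_induces hsol₀ hind₀
  obtain ⟨hlam₀, hdiff₀⟩ := zp_compare hXi.2.2 hzp₀ hnorm.1 e.1.1
  have hu : u = fun v => u₀ v + (u e.1.1 - u₀ e.1.1) := by
    funext v
    have := hdiff₀ v e.1.1
    linarith
  have hsolu : IsErgodicSol E VMax r lam u := by
    rw [hu]
    exact ergSol_shift _ (hlam₀ ▸ hsol₀)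
  have hstrict := strict_of_Pcell hr hsolu hnorm.1 hXi.1 hXi.2.1
  have hee : ((e.1.1, e.1.2) : Fin n × Fin n) = e.1 := rfl
  have heE : ((e.1.1, e.1.2) : Fin n × Fin n) ∈ E := by rw [hee]; exact e.2
  by_cases h : e.1.1 ∈ VMax
  · -- Max case
    have hσe : σ ⟨e.1.1, h⟩ ≠ e.1.2 := hMax h
    have hfne : combine VMax σ τ e.1.1 ≠ e.1.2 := by
      rw [show combine VMax σ τ e.1.1 = σ ⟨e.1.1, h⟩ from dif_pos h]
      exact hσe
    set B := lam + u e.1.1 - u e.1.2 with hB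
    have hmem : ∀ x : ℝ, x < B → Function.update r e x ∈ Pcell E VMax σ τ := by
      intro x hx
      rw [hB] at hx
      refine core_rigid hXi.1 hXi.2.1 hXi.2.2 ((zp_update_iff e x hfne).2 hnorm.1) ?_ ?_
      · intro v hv j' hj' hne'
        rw [wt_update]
        by_cases hp : ((v, j') : Fin n × Fin n) = e.1
        · rw [if_pos hp]
          have hv1 : v = e.1.1 := congrArg Prod.fst hp
          have hv2 : j' = e.1.2 := congrArg Prod.snd hp
          subst hv1; subst hv2
          linarith
        · rw [if_neg hp]
          exact hstrict.1 v hv j' hj' hne'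
      · intro v hv j' hj' hne'
        have hp : ((v, j') : Fin n × Fin n) ≠ e.1 := by
          intro hp
          exact hv (by rw [show v = e.1.1 from congrArg Prod.fst hp]; exact h)
        rw [wt_update, if_neg hp]
        exact hstrict.2 v hv j' hj' hne'
    have hub : ∀ x' : ℝ,
        (∃ σ' τ', InXi E VMax σ' τ' ∧ Function.update r e x' ∈ Pcell E VMax σ' τ' ∧
          σ' ⟨e.1.1, h⟩ ≠ e.1.2) → x' ≤ B := by
      rintro x' ⟨σ', τ', hXi', hP', hne'⟩
      obtain ⟨lam', u', hsol', hind'⟩ := hP'.1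
      have hev : x' + u' e.1.2 ≤ lam' + u' e.1.1 :=
        ((hsol' e.1.1).1 h).2 ⟨e.1.2, heE, by rw [wt_update, if_pos hee]⟩
      have hne2 : ∀ jj : Fin n, jj ≠ e.1.2 → ((e.1.1, jj) : Fin n × Fin n) ≠ e.1 := by
        intro jj hjj hp
        exact hjj (congrArg Prod.snd hp)
      have hval' : lam' + u' e.1.1
          = wt E r (e.1.1, σ' ⟨e.1.1, h⟩) + u' (σ' ⟨e.1.1, h⟩) := by
        have hgu := IsGreatest.unique ((hsol' e.1.1).1 h) (hind'.2.2.1 ⟨e.1.1, h⟩)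
        rwa [wt_update, if_neg (hne2 _ hne')] at hgu
      set y := min x' (B - 1) with hy
      have hyB : y < B := lt_of_le_of_lt (min_le_right _ _) (by linarith)
      have hyx : y ≤ x' := min_le_left _ _
      have hsol3 : IsErgodicSol E VMax (Function.update r e y) lam' u' := by
        intro v
        constructor
        · intro hv
          by_cases hvi : v = e.1.1
          · subst hvi
            refine ⟨⟨σ' ⟨e.1.1, h⟩, hind'.1 ⟨e.1.1, h⟩, ?_⟩, ?_⟩
            · rw [wt_update, if_neg (hne2 _ hne')]
              exact hval'
            · rintro val ⟨j', hj', rfl⟩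
              rw [wt_update]
              by_cases hp : ((e.1.1, j') : Fin n × Fin n) = e.1
              · rw [if_pos hp]
                have hv2 : j' = e.1.2 := congrArg Prod.snd hp
                subst hv2
                linarith
              · rw [if_neg hp]
                refine ((hsol' e.1.1).1 h).2 ⟨j', hj', ?_⟩
                rw [wt_update, if_neg hp]
          · rw [outVals_update_ne r e y u' hvi, ← outVals_update_ne r e x' u' hvi]
            exact (hsol' v).1 hv
        · intro hv
          have hvi : v ≠ e.1.1 := fun hq => hv (by rw [hq]; exact h)
          rw [outVals_update_ne r e y u' hvi, ← outVals_update_ne r e x' u' hvi]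
          exact (hsol' v).2 hv
      have hchosenMax : ∀ i : {i : Fin n // i ∈ VMax},
          wt E (Function.update r e y) (i.1, σ' i) + u' (σ' i) = lam' + u' i.1 := by
        intro i
        have hgu := IsGreatest.unique ((hsol' i.1).1 i.2) (hind'.2.2.1 i)
        by_cases hvi : i.1 = e.1.1
        · have hieq : i = ⟨e.1.1, h⟩ := Subtype.ext hvi
          subst hieq
          rw [wt_update, if_neg (hne2 _ hne')]
          rw [wt_update, if_neg (hne2 _ hne')] at hgu
          exact hgu.symm
        · have hp : ((i.1, σ' i) : Fin n × Fin n) ≠ e.1 := fun hp =>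
            hvi (congrArg Prod.fst hp)
          rw [wt_update, if_neg hp]
          rw [wt_update, if_neg hp] at hgu
          exact hgu.symm
      have hchosenMin : ∀ i : {i : Fin n // i ∉ VMax},
          wt E (Function.update r e y) (i.1, τ' i) + u' (τ' i) = lam' + u' i.1 := by
        intro i
        have hgu := IsLeast.unique ((hsol' i.1).2 i.2) (hind'.2.2.2 i)
        have hvi : i.1 ≠ e.1.1 := fun hq => i.2 (by rw [hq]; exact h)
        have hp : ((i.1, τ' i) : Fin n × Fin n) ≠ e.1 := fun hp =>
          hvi (congrArg Prod.fst hp)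
        rw [wt_update, if_neg hp]
        rw [wt_update, if_neg hp] at hgu
        exact hgu.symm
      have hind3 : Induces E VMax (Function.update r e y) u' σ' τ' :=
        ⟨hind'.1, hind'.2.1,
          fun i => by rw [hchosenMax i]; exact (hsol3 i.1).1 i.2,
          fun i => by rw [hchosenMin i]; exact (hsol3 i.1).2 i.2⟩
      obtain ⟨hσeq, hτeq⟩ := (hmem y hyB).2 σ' τ' ⟨lam', u', hsol3, hind3⟩
      rw [hσeq, hτeq] at hind'
      have hzp' : IsZeroPlayerSol E (combine VMax σ τ) r lam' u' :=
        (zp_update_iff e x' hfne).1 (zp_of_induces hsol' hind')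
      obtain ⟨hlam', hdiff'⟩ := zp_compare hXi.2.2 hzp' hnorm.1 e.1.1
      have hd := hdiff' e.1.1 e.1.2
      rw [hB]
      rw [hlam'] at hev
      linarith
    simp only [Zedge, dif_pos h]
    apply le_antisymm
    · apply sSup_le
      rintro z ⟨x', rfl, σ', τ', hXi', hP', hne'⟩
      exact EReal.coe_le_coe_iff.2 (hub x' ⟨σ', τ', hXi', hP', hne'⟩)
    · by_contra hcon
      push_neg at hcon
      obtain ⟨xx, h1, h2⟩ := EReal.exists_between_coe_real hcon
      have hxxB : xx < B := EReal.coe_lt_coe_iff.1 h2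
      exact (not_le.2 h1) (le_sSup ⟨xx, rfl, σ, τ, hXi, hmem xx hxxB, hσe⟩)
  · -- Min case
    have hτe : τ ⟨e.1.1, h⟩ ≠ e.1.2 := hMin h
    have hfne : combine VMax σ τ e.1.1 ≠ e.1.2 := by
      rw [show combine VMax σ τ e.1.1 = τ ⟨e.1.1, h⟩ from dif_neg h]
      exact hτe
    set B := lam + u e.1.1 - u e.1.2 with hB
    have hmem : ∀ x : ℝ, B < x → Function.update r e x ∈ Pcell E VMax σ τ := by
      intro x hx
      rw [hB] at hx
      refine core_rigid hXi.1 hXi.2.1 hXi.2.2 ((zp_update_iff e x hfne).2 hnorm.1) ?_ ?_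
      · intro v hv j' hj' hne'
        have hp : ((v, j') : Fin n × Fin n) ≠ e.1 := by
          intro hp
          exact h (by rw [← show v = e.1.1 from congrArg Prod.fst hp]; exact hv)
        rw [wt_update, if_neg hp]
        exact hstrict.1 v hv j' hj' hne'
      · intro v hv j' hj' hne'
        rw [wt_update]
        by_cases hp : ((v, j') : Fin n × Fin n) = e.1
        · rw [if_pos hp]
          have hv1 : v = e.1.1 := congrArg Prod.fst hp
          have hv2 : j' = e.1.2 := congrArg Prod.snd hp
          subst hv1; subst hv2
          linarith
        · rw [if_neg hp]
          exact hstrict.2 v hv j' hj' hne'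
    have hub : ∀ x' : ℝ,
        (∃ σ' τ', InXi E VMax σ' τ' ∧ Function.update r e x' ∈ Pcell E VMax σ' τ' ∧
          τ' ⟨e.1.1, h⟩ ≠ e.1.2) → B ≤ x' := by
      rintro x' ⟨σ', τ', hXi', hP', hne'⟩
      obtain ⟨lam', u', hsol', hind'⟩ := hP'.1
      have hev : lam' + u' e.1.1 ≤ x' + u' e.1.2 :=
        ((hsol' e.1.1).2 h).2 ⟨e.1.2, heE, by rw [wt_update, if_pos hee]⟩
      have hne2 : ∀ jj : Fin n, jj ≠ e.1.2 → ((e.1.1, jj) : Fin n × Fin n) ≠ e.1 := by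
        intro jj hjj hp
        exact hjj (congrArg Prod.snd hp)
      have hval' : lam' + u' e.1.1
          = wt E r (e.1.1, τ' ⟨e.1.1, h⟩) + u' (τ' ⟨e.1.1, h⟩) := by
        have hgu := IsLeast.unique ((hsol' e.1.1).2 h) (hind'.2.2.2 ⟨e.1.1, h⟩)
        rwa [wt_update, if_neg (hne2 _ hne')] at hgu
      set y := max x' (B + 1) with hy
      have hyB : B < y := lt_of_lt_of_le (by linarith) (le_max_right _ _)
      have hyx : x' ≤ y := le_max_left _ _
      have hsol3 : IsErgodicSol E VMax (Function.update r e y) lam' u' := by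
        intro v
        constructor
        · intro hv
          have hvi : v ≠ e.1.1 := fun hq => h (by rw [← hq]; exact hv)
          rw [outVals_update_ne r e y u' hvi, ← outVals_update_ne r e x' u' hvi]
          exact (hsol' v).1 hv
        · intro hv
          by_cases hvi : v = e.1.1
          · subst hvi
            refine ⟨⟨τ' ⟨e.1.1, h⟩, hind'.2.1 ⟨e.1.1, h⟩, ?_⟩, ?_⟩
            · rw [wt_update, if_neg (hne2 _ hne')]
              exact hval'
            · rintro val ⟨j', hj', rfl⟩
              rw [wt_update]
              by_cases hp : ((e.1.1, j') : Fin n × Fin n) = e.1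
              · rw [if_pos hp]
                have hv2 : j' = e.1.2 := congrArg Prod.snd hp
                subst hv2
                linarith
              · rw [if_neg hp]
                refine ((hsol' e.1.1).2 h).2 ⟨j', hj', ?_⟩
                rw [wt_update, if_neg hp]
          · rw [outVals_update_ne r e y u' hvi, ← outVals_update_ne r e x' u' hvi]
            exact (hsol' v).2 hv
      have hchosenMax : ∀ i : {i : Fin n // i ∈ VMax},
          wt E (Function.update r e y) (i.1, σ' i) + u' (σ' i) = lam' + u' i.1 := by
        intro i
        have hgu := IsGreatest.unique ((hsol' i.1).1 i.2) (hind'.2.2.1 i)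
        have hvi : i.1 ≠ e.1.1 := fun hq => h (by rw [← hq]; exact i.2)
        have hp : ((i.1, σ' i) : Fin n × Fin n) ≠ e.1 := fun hp =>
          hvi (congrArg Prod.fst hp)
        rw [wt_update, if_neg hp]
        rw [wt_update, if_neg hp] at hgu
        exact hgu.symm
      have hchosenMin : ∀ i : {i : Fin n // i ∉ VMax},
          wt E (Function.update r e y) (i.1, τ' i) + u' (τ' i) = lam' + u' i.1 := by
        intro i
        have hgu := IsLeast.unique ((hsol' i.1).2 i.2) (hind'.2.2.2 i)
        by_cases hvi : i.1 = e.1.1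
        · have hieq : i = ⟨e.1.1, h⟩ := Subtype.ext hvi
          subst hieq
          rw [wt_update, if_neg (hne2 _ hne')]
          rw [wt_update, if_neg (hne2 _ hne')] at hgu
          exact hgu.symm
        · have hp : ((i.1, τ' i) : Fin n × Fin n) ≠ e.1 := fun hp =>
            hvi (congrArg Prod.fst hp)
          rw [wt_update, if_neg hp]
          rw [wt_update, if_neg hp] at hgu
          exact hgu.symm
      have hind3 : Induces E VMax (Function.update r e y) u' σ' τ' :=
        ⟨hind'.1, hind'.2.1,
          fun i => by rw [hchosenMax i]; exact (hsol3 i.1).1 i.2,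
          fun i => by rw [hchosenMin i]; exact (hsol3 i.1).2 i.2⟩
      obtain ⟨hσeq, hτeq⟩ := (hmem y hyB).2 σ' τ' ⟨lam', u', hsol3, hind3⟩
      rw [hσeq, hτeq] at hind'
      have hzp' : IsZeroPlayerSol E (combine VMax σ τ) r lam' u' :=
        (zp_update_iff e x' hfne).1 (zp_of_induces hsol' hind')
      obtain ⟨hlam', hdiff'⟩ := zp_compare hXi.2.2 hzp' hnorm.1 e.1.1
      have hd := hdiff' e.1.1 e.1.2
      rw [hB]
      rw [hlam'] at hev
      linarith
    simp only [Zedge, dif_neg h]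
    apply le_antisymm
    · by_contra hcon
      push_neg at hcon
      obtain ⟨xx, h1, h2⟩ := EReal.exists_between_coe_real hcon
      have hxxB : B < xx := EReal.coe_lt_coe_iff.1 h1
      exact (not_le.2 h2) (sInf_le ⟨xx, rfl, σ, τ, hXi, hmem xx hxxB, hτe⟩)
    · apply le_sInf
      rintro z ⟨x', rfl, σ', τ', hXi', hP', hne'⟩
      exact EReal.coe_le_coe_iff.2 (hub x' ⟨σ', τ', hXi', hP', hne'⟩)
end
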